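/- Let (Aᵢ,eᵢ) be digroups with group parts Jᵢ (i = 1,2), A = A₁ ∪ A₂, J = J₁ ∪ J₂. Define Ω = Ω₁ ∪ Ω₂ ⊆ [A⁺]_ω where Ω₁ = {[u]₁ : u ∈ J₁ * J₂} (reduced words of the free product of groups J₁, J₂) and Ω₂ = {[pxq]_{|p|+1} : p,q ∈ J*, x ∈ A \ J, pxq reduced}. With the operations ⊢ and ⊣ given by reduction and multiplication at the distinguished position (as in the theorem: [w]_n ⊢ [u]₁ = [(wu)^]₁, [u]₁ ⊣ [w]_n = [(uw)^]₁, and the three-case formulas for [w]_n ⊢ [pxq]_{|p|+1} and [pxq]_{|p|+1} ⊣ [w]_n), the pair (Ω, e₁) is a digroup. -/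

import Mathlib

/-- A disemigroup: two associative operations `l` (⊢) and `r` (⊣)
satisfying the dialgebra axioms. -/
structure DisemigroupStruct (D : Type) where
  l : D → D → D
  r : D → D → D
  l_assoc : ∀ a b c, l (l a b) c = l a (l b c)
  r_assoc : ∀ a b c, r (r a b) c = r a (r b c)
  ax1 : ∀ a b c, r a (l b c) = r a (r b c)
  ax2 : ∀ a b c, l (r a b) c = l (l a b) c
  ax3 : ∀ a b c, l a (r b c) = r (l a b) c

/-- A digroup: a disemigroup with a bar-unit `one` and inverses. -/
structure DigroupStruct (D : Type) extends DisemigroupStruct D where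
  one : D
  inv : D → D
  one_l : ∀ a, l one a = a
  r_one : ∀ a, r a one = a
  l_inv : ∀ a, l a (inv a) = one
  inv_r : ∀ a, r (inv a) a = one

def IsDisemigroupHom {A B : Type} (G : DisemigroupStruct A) (H : DisemigroupStruct B)
    (f : A → B) : Prop :=
  (∀ a b, f (G.l a b) = H.l (f a) (f b)) ∧ (∀ a b, f (G.r a b) = H.r (f a) (f b))

def IsDigroupHom {A B : Type} (G : DigroupStruct A) (H : DigroupStruct B)
    (f : A → B) : Prop :=
  (∀ a b, f (G.l a b) = H.l (f a) (f b)) ∧ (∀ a b, f (G.r a b) = H.r (f a) (f b)) ∧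
  f G.one = H.one

/-- The group part J = {a ⊢ 1 : a ∈ G}. -/
def groupPart {A : Type} (G : DigroupStruct A) : Set A := {a | ∃ b, a = G.l b G.one}

/-- The halo: the set of bar-units. -/
def halo {A : Type} (G : DigroupStruct A) : Set A := {e | ∀ a, G.l e a = a ∧ G.r a e = a}

/-- `(D, g1, g2)` is a free product (coproduct) of the digroups `D1`, `D2`. -/
def IsFreeProduct {A1 A2 B : Type} (D1 : DigroupStruct A1) (D2 : DigroupStruct A2)
    (D : DigroupStruct B) (g1 : A1 → B) (g2 : A2 → B) : Prop :=
  IsDigroupHom D1 D g1 ∧ IsDigroupHom D2 D g2 ∧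
  ∀ {C : Type} (G : DigroupStruct C) (f1 : A1 → C) (f2 : A2 → C),
    IsDigroupHom D1 G f1 → IsDigroupHom D2 G f2 →
    ∃! φ : B → C, IsDigroupHom D G φ ∧ φ ∘ g1 = f1 ∧ φ ∘ g2 = f2

open scoped Classical

section OmegaConstruction

variable {D1 D2 : Type} (A1 : DigroupStruct D1) (A2 : DigroupStruct D2)

/-- `x` is the unit of its factor. -/
def unitL : D1 ⊕ D2 → Prop
  | Sum.inl a => a = A1.one
  | Sum.inr a => a = A2.one

/-- `x` lies in the group part of its factor. -/
def inJ : D1 ⊕ D2 → Prop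
  | Sum.inl a => a ∈ groupPart A1
  | Sum.inr a => a ∈ groupPart A2

/-- Two letters lie in the same factor. -/
def sameF {D1 D2 : Type} (x y : D1 ⊕ D2) : Prop := x.isLeft = y.isLeft

/-- `x ↦ x^♯ = x ⊢ e` computed in its factor. -/
def sharp : D1 ⊕ D2 → D1 ⊕ D2
  | Sum.inl a => Sum.inl (A1.l a A1.one)
  | Sum.inr a => Sum.inr (A2.l a A2.one)

/-- The letter map inducing `τ : A* → J*`: fixes `J` and sends `x ∉ J` to `x^♯`. -/
noncomputable def tauL (x : D1 ⊕ D2) : D1 ⊕ D2 :=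
  if inJ A1 A2 x then x else sharp A1 A2 x

/-- Same-factor product `x ⊢ y` of letters (junk value on mixed factors). -/
def lmulL : D1 ⊕ D2 → D1 ⊕ D2 → D1 ⊕ D2
  | Sum.inl a, Sum.inl b => Sum.inl (A1.l a b)
  | Sum.inr a, Sum.inr b => Sum.inr (A2.l a b)
  | x, _ => x

/-- Same-factor product `x ⊣ y` of letters (junk value on mixed factors). -/
def rmulL : D1 ⊕ D2 → D1 ⊕ D2 → D1 ⊕ D2
  | Sum.inl a, Sum.inl b => Sum.inl (A1.r a b)
  | Sum.inr a, Sum.inr b => Sum.inr (A2.r a b)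
  | x, _ => x

/-- Push one letter onto a reduced word of the free product of groups `J₁ * J₂`
(the empty list representing the identity). -/
noncomputable def push (acc : List (D1 ⊕ D2)) (x : D1 ⊕ D2) : List (D1 ⊕ D2) :=
  if unitL A1 A2 x then acc
  else
    match acc.getLast? with
    | none => [x]
    | some y =>
      if sameF y x then
        if unitL A1 A2 (lmulL A1 A2 y x) then acc.dropLast
        else acc.dropLast ++ [lmulL A1 A2 y x]
      else acc ++ [x]

/-- Reduction of a word of `J`-letters to the reduced word of `J₁ * J₂`. -/
noncomputable def reduceW (w : List (D1 ⊕ D2)) : List (D1 ⊕ D2) :=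
  w.foldl (push A1 A2) []

/-- `ŵ`: the reduced word of `τ(w)` in `J₁ * J₂`. -/
noncomputable def hatW (w : List (D1 ⊕ D2)) : List (D1 ⊕ D2) :=
  reduceW A1 A2 (w.map (tauL A1 A2))

/-- Convert the empty reduced word to its representative `e₁`. -/
noncomputable def toRep (w : List (D1 ⊕ D2)) : List (D1 ⊕ D2) :=
  if w = [] then [Sum.inl A1.one] else w

/-- A reduced word on `A₁ ∪ A₂°`: no units, and successive letters lie in
different factors. -/
def AltRed (u : List (D1 ⊕ D2)) : Prop :=
  (∀ c ∈ u, ¬ unitL A1 A2 c) ∧ List.Chain' (fun a b => ¬ sameF a b) u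

/-- Membership in `Ω = Ω₁ ∪ Ω₂`. -/
def InOmega (z : List (D1 ⊕ D2) × ℕ) : Prop :=
  (z.2 = 1 ∧ (z.1 = [Sum.inl A1.one] ∨
    (z.1 ≠ [] ∧ AltRed A1 A2 z.1 ∧ ∀ c ∈ z.1, inJ A1 A2 c))) ∨
  (∃ p x q, z.1 = p ++ x :: q ∧ z.2 = p.length + 1 ∧ ¬ inJ A1 A2 x ∧
    (∀ c ∈ p, inJ A1 A2 c) ∧ (∀ c ∈ q, inJ A1 A2 c) ∧ AltRed A1 A2 z.1)

/-- The carrier `Ω = Ω₁ ∪ Ω₂` of the free product of the digroups `A₁`, `A₂`. -/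
def Omega : Type := {z : List (D1 ⊕ D2) × ℕ // InOmega A1 A2 z}

/-- The operation `⊢` of `Ω`, on representatives. -/
noncomputable def opLspec (z z' : List (D1 ⊕ D2) × ℕ) : List (D1 ⊕ D2) × ℕ :=
  @ite _ (z'.2 = 1 ∧ ∀ c ∈ z'.1, inJ A1 A2 c) (Classical.propDecidable _)
    -- second operand is `[u]₁ ∈ Ω₁`:  `[w]_n ⊢ [u]₁ = [(wu)^]₁`
    ((toRep A1 (hatW A1 A2 (z.1 ++ z'.1)), 1))
    (
    -- second operand is `[pxq]_{|p|+1} ∈ Ω₂`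
    let p := z'.1.take (z'.2 - 1)
    let x := z'.1.getD (z'.2 - 1) (Sum.inl A1.one)
    let q := z'.1.drop z'.2
    let r := hatW A1 A2 (z.1 ++ p)
    match r.getLast? with
    | none => (x :: q, 1)  -- `(wp)^ = e₁`
    | some c =>
      if sameF c x then
        -- `(wp)^ = vc` with `c` in the same factor as `x`
        (r.dropLast ++ lmulL A1 A2 c x :: q, r.dropLast.length + 1)
      else (r ++ x :: q, r.length + 1))

/-- The operation `⊣` of `Ω`, on representatives. -/
noncomputable def opRspec (z z' : List (D1 ⊕ D2) × ℕ) : List (D1 ⊕ D2) × ℕ :=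
  @ite _ (z.2 = 1 ∧ ∀ c ∈ z.1, inJ A1 A2 c) (Classical.propDecidable _)
    -- first operand is `[u]₁ ∈ Ω₁`:  `[u]₁ ⊣ [w]_n = [(uw)^]₁`
    ((toRep A1 (hatW A1 A2 (z.1 ++ z'.1)), 1))
    (
    -- first operand is `[pxq]_{|p|+1} ∈ Ω₂`
    let p := z.1.take (z.2 - 1)
    let x := z.1.getD (z.2 - 1) (Sum.inl A1.one)
    let q := z.1.drop z.2
    let r := hatW A1 A2 (q ++ z'.1)
    match r with
    | [] => (p ++ [x], p.length + 1)  -- `(qw)^ = e₁`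
    | c :: v =>
      if sameF x c then
        -- `(qw)^ = cv` with `c` in the same factor as `x`
        (p ++ rmulL A1 A2 x c :: v, p.length + 1)
      else (p ++ x :: c :: v, p.length + 1))

end OmegaConstruction

section DigroupLemmas

variable {X : Type} (G : DigroupStruct X)

lemma g_one_mem : G.one ∈ groupPart G := ⟨G.one, (G.one_l G.one).symm⟩

lemma g_l_one {a : X} (h : a ∈ groupPart G) : G.l a G.one = a := by
  obtain ⟨b, rfl⟩ := h
  rw [G.l_assoc, G.one_l]

lemma g_l_mem (a : X) {b : X} (hb : b ∈ groupPart G) : G.l a b ∈ groupPart G := by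
  obtain ⟨c, rfl⟩ := hb
  exact ⟨G.l a c, (G.l_assoc a c G.one).symm⟩

/-- group inverse within J -/
def ginv (a : X) : X := G.l (G.inv a) G.one

lemma ginv_mem (a : X) : ginv G a ∈ groupPart G := ⟨G.inv a, rfl⟩

lemma g_l_ginv (a : X) : G.l a (ginv G a) = G.one := by
  unfold ginv
  rw [← G.l_assoc, G.l_inv, G.one_l]

lemma g_ginv_l {a : X} (ha : a ∈ groupPart G) : G.l (ginv G a) a = G.one := by
  set b := ginv G a with hb
  have hbJ : b ∈ groupPart G := ginv_mem G a
  have h1 : G.l a b = G.one := g_l_ginv G a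
  have h2 : G.l b (ginv G b) = G.one := g_l_ginv G b
  calc G.l b a = G.l b (G.l a (G.l b (ginv G b))) := by
        rw [h2, g_l_one G ha]
    _ = G.l (G.l b (G.l a b)) (ginv G b) := by
        rw [← G.l_assoc a b (ginv G b), ← G.l_assoc b (G.l a b) (ginv G b)]
    _ = G.l b (ginv G b) := by rw [h1, g_l_one G hbJ]
    _ = G.one := h2

lemma g_one_r {b : X} (hb : b ∈ groupPart G) : G.r G.one b = b := by
  have : G.r (G.l b (G.inv b)) b = G.l b (G.r (G.inv b) b) := (G.ax3 b (G.inv b) b).symm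
  rw [G.l_inv, G.inv_r] at this
  rw [this, g_l_one G hb]

lemma g_r_eq_l {a b : X} (ha : a ∈ groupPart G) (hb : b ∈ groupPart G) :
    G.r a b = G.l a b := by
  conv_lhs => rw [← g_l_one G ha]
  rw [← G.ax3, g_one_r G hb]

lemma g_l_eq_one_mem {c x : X} (hc : c ∈ groupPart G) (h : G.l c x = G.one) :
    x ∈ groupPart G := by
  have : G.l (ginv G c) (G.l c x) = x := by
    rw [← G.l_assoc, g_ginv_l G hc, G.one_l]
  rw [h] at this
  rw [← this]
  exact g_l_mem G _ (g_one_mem G)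

lemma g_l_notmem {c x : X} (hc : c ∈ groupPart G) (hx : x ∉ groupPart G) :
    G.l c x ∉ groupPart G := by
  intro hmem
  apply hx
  have : G.l (ginv G c) (G.l c x) = x := by
    rw [← G.l_assoc, g_ginv_l G hc, G.one_l]
  rw [← this]
  exact g_l_mem G _ hmem

lemma g_r_mem_of_mem {a b : X} (ha : a ∈ groupPart G) (hb : b ∈ groupPart G) :
    G.r a b ∈ groupPart G := by
  rw [g_r_eq_l G ha hb]; exact g_l_mem G _ hb

lemma g_r_eq_one_mem {x c : X} (hc : c ∈ groupPart G) (h : G.r x c = G.one) :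
    x ∈ groupPart G := by
  have hgi : c ∈ groupPart G := hc
  have h1 : G.r c (ginv G c) = G.one := by
    rw [g_r_eq_l G hc (ginv_mem G c), g_l_ginv]
  have : G.r (G.r x c) (ginv G c) = x := by
    rw [G.r_assoc, h1, G.r_one]
  rw [h] at this
  rw [← this, g_r_eq_l G (g_one_mem G) (ginv_mem G c)]
  exact g_l_mem G _ (ginv_mem G c)

lemma g_r_notmem {x c : X} (hx : x ∉ groupPart G) (hc : c ∈ groupPart G) :
    G.r x c ∉ groupPart G := by
  intro hmem
  apply hx
  have h1 : G.r c (ginv G c) = G.one := by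
    rw [g_r_eq_l G hc (ginv_mem G c), g_l_ginv]
  have : G.r (G.r x c) (ginv G c) = x := by
    rw [G.r_assoc, h1, G.r_one]
  rw [← this]
  exact g_r_mem_of_mem G hmem (ginv_mem G c)

lemma g_sharp_r (x : X) {c : X} (hc : c ∈ groupPart G) :
    G.l (G.r x c) G.one = G.l (G.l x G.one) c := by
  rw [G.ax2, G.l_assoc, G.l_assoc, G.one_l, g_l_one G hc]

lemma g_rr {x c d : X} (hc : c ∈ groupPart G) (hd : d ∈ groupPart G) :
    G.r (G.r x c) d = G.r x (G.l c d) := by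
  rw [G.r_assoc, g_r_eq_l G hc hd]

lemma g_ginv_notunit {a : X} (ha : a ∈ groupPart G) (h : a ≠ G.one) :
    ginv G a ≠ G.one := by
  intro he
  apply h
  have := g_l_ginv G a
  rw [he, g_l_one G ha] at this
  exact this

end DigroupLemmas

section LetterLemmas

variable {D1 D2 : Type} (A1 : DigroupStruct D1) (A2 : DigroupStruct D2)

/-- letter-level group inverse -/
noncomputable def giL : D1 ⊕ D2 → D1 ⊕ D2
  | Sum.inl a => Sum.inl (ginv A1 a)
  | Sum.inr a => Sum.inr (ginv A2 a)

variable {A1 A2}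

lemma unit_inJ {x : D1 ⊕ D2} (h : unitL A1 A2 x) : inJ A1 A2 x := by
  cases x with
  | inl a => simp only [unitL] at h; subst h; exact g_one_mem A1
  | inr a => simp only [unitL] at h; subst h; exact g_one_mem A2

lemma tau_inJ {x : D1 ⊕ D2} (h : inJ A1 A2 x) : tauL A1 A2 x = x := by
  unfold tauL; rw [if_pos h]

lemma inJ_tau (x : D1 ⊕ D2) : inJ A1 A2 (tauL A1 A2 x) := by
  unfold tauL
  split
  · assumption
  · cases x with
    | inl a => exact ⟨a, rfl⟩
    | inr a => exact ⟨a, rfl⟩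

lemma sameF_lmul {x y : D1 ⊕ D2} (h : sameF x y) : sameF (lmulL A1 A2 x y) x := by
  cases x <;> cases y <;> simp [sameF, lmulL] at h ⊢

lemma sameF_rmul {x y : D1 ⊕ D2} (h : sameF x y) : sameF (rmulL A1 A2 x y) x := by
  cases x <;> cases y <;> simp [sameF, rmulL] at h ⊢

lemma lmul_assoc {x y z : D1 ⊕ D2} (hxy : sameF x y) (hyz : sameF y z) :
    lmulL A1 A2 (lmulL A1 A2 x y) z = lmulL A1 A2 x (lmulL A1 A2 y z) := by
  cases x <;> cases y <;> cases z <;> simp [sameF] at hxy hyz <;> simp [lmulL]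
  · exact A1.l_assoc _ _ _
  · exact A2.l_assoc _ _ _

lemma one_lmul {x y : D1 ⊕ D2} (hx : unitL A1 A2 x) (h : sameF x y) :
    lmulL A1 A2 x y = y := by
  cases x <;> cases y <;> simp [sameF] at h <;> simp [unitL] at hx <;> subst hx <;>
    simp [lmulL]
  · exact A1.one_l _
  · exact A2.one_l _

lemma lmul_one {x y : D1 ⊕ D2} (hy : unitL A1 A2 y) (h : sameF x y)
    (hx : inJ A1 A2 x) : lmulL A1 A2 x y = x := by
  cases x <;> cases y <;> simp [sameF] at h <;> simp [unitL] at hy <;> subst hy <;>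
    simp [lmulL]
  · exact g_l_one A1 hx
  · exact g_l_one A2 hx

lemma inJ_lmul {x y : D1 ⊕ D2} (hy : inJ A1 A2 y) (h : sameF x y) :
    inJ A1 A2 (lmulL A1 A2 x y) := by
  cases x <;> cases y <;> simp [sameF] at h <;> simp [lmulL, inJ] at hy ⊢
  · exact g_l_mem A1 _ hy
  · exact g_l_mem A2 _ hy

lemma inJ_of_unit_lmul {c x : D1 ⊕ D2} (hc : inJ A1 A2 c) (hs : sameF c x)
    (h : unitL A1 A2 (lmulL A1 A2 c x)) : inJ A1 A2 x := by
  cases c <;> cases x <;> simp [sameF] at hs <;> simp [lmulL, unitL] at h <;>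
    simp [inJ] at hc ⊢
  · exact g_l_eq_one_mem A1 hc h
  · exact g_l_eq_one_mem A2 hc h

lemma notJ_lmul {c x : D1 ⊕ D2} (hc : inJ A1 A2 c) (hx : ¬ inJ A1 A2 x)
    (hs : sameF c x) : ¬ inJ A1 A2 (lmulL A1 A2 c x) := by
  cases c <;> cases x <;> simp [sameF] at hs <;> simp [lmulL, inJ] at hc hx ⊢
  · exact g_l_notmem A1 hc hx
  · exact g_l_notmem A2 hc hx

lemma notJ_rmul {x c : D1 ⊕ D2} (hx : ¬ inJ A1 A2 x) (hc : inJ A1 A2 c)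
    (hs : sameF x c) : ¬ inJ A1 A2 (rmulL A1 A2 x c) := by
  cases x <;> cases c <;> simp [sameF] at hs <;> simp [rmulL, inJ] at hc hx ⊢
  · exact g_r_notmem A1 hx hc
  · exact g_r_notmem A2 hx hc

lemma inJ_of_unit_rmul {x c : D1 ⊕ D2} (hc : inJ A1 A2 c) (hs : sameF x c)
    (h : unitL A1 A2 (rmulL A1 A2 x c)) : inJ A1 A2 x := by
  cases x <;> cases c <;> simp [sameF] at hs <;> simp [rmulL, unitL] at h <;>
    simp [inJ] at hc ⊢
  · exact g_r_eq_one_mem A1 hc h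
  · exact g_r_eq_one_mem A2 hc h

lemma tau_lmul {c x : D1 ⊕ D2} (hc : inJ A1 A2 c) (hs : sameF c x) :
    tauL A1 A2 (lmulL A1 A2 c x) = lmulL A1 A2 c (tauL A1 A2 x) := by
  by_cases hx : inJ A1 A2 x
  · rw [tau_inJ hx, tau_inJ (inJ_lmul hx hs)]
  · rw [tauL, if_neg (notJ_lmul hc hx hs), tauL, if_neg hx]
    cases c <;> cases x <;> simp [sameF] at hs <;> simp [lmulL, sharp]
    · exact A1.l_assoc _ _ _
    · exact A2.l_assoc _ _ _

lemma tau_rmul {x c : D1 ⊕ D2} (hc : inJ A1 A2 c) (hs : sameF x c) :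
    tauL A1 A2 (rmulL A1 A2 x c) = lmulL A1 A2 (tauL A1 A2 x) c := by
  by_cases hx : inJ A1 A2 x
  · rw [tau_inJ hx, tau_inJ]
    · cases x <;> cases c <;> simp [sameF] at hs <;> simp [rmulL, lmulL, inJ] at hx ⊢
      · exact g_r_eq_l A1 hx hc
      · exact g_r_eq_l A2 hx hc
    · cases x <;> cases c <;> simp [sameF] at hs <;> simp [rmulL, inJ] at hx ⊢
      · exact g_r_mem_of_mem A1 hx hc
      · exact g_r_mem_of_mem A2 hx hc
  · rw [tauL, if_neg (notJ_rmul hx hc hs), tauL, if_neg hx]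
    cases x <;> cases c <;> simp [sameF] at hs <;> simp [rmulL, lmulL, sharp]
    · exact g_sharp_r A1 _ hc
    · exact g_sharp_r A2 _ hc

lemma rmul_eq_lmul {x c : D1 ⊕ D2} (hx : inJ A1 A2 x) (hc : inJ A1 A2 c)
    (hs : sameF x c) : rmulL A1 A2 x c = lmulL A1 A2 x c := by
  cases x <;> cases c <;> simp [sameF] at hs <;> simp [rmulL, lmulL, inJ] at hx hc ⊢
  · exact g_r_eq_l A1 hx hc
  · exact g_r_eq_l A2 hx hc

lemma rmul_rmul {x c d : D1 ⊕ D2} (hc : inJ A1 A2 c) (hd : inJ A1 A2 d)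
    (hxc : sameF x c) (hcd : sameF c d) :
    rmulL A1 A2 (rmulL A1 A2 x c) d = rmulL A1 A2 x (lmulL A1 A2 c d) := by
  cases x <;> cases c <;> cases d <;> simp [sameF] at hxc hcd <;>
    simp [rmulL, lmulL, inJ] at hc hd ⊢
  · exact g_rr A1 hc hd
  · exact g_rr A2 hc hd

lemma rmul_unit {x d : D1 ⊕ D2} (hd : unitL A1 A2 d) (hs : sameF x d) :
    rmulL A1 A2 x d = x := by
  cases x <;> cases d <;> simp [sameF] at hs <;> simp [unitL] at hd <;> subst hd <;>
    simp [rmulL]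
  · exact A1.r_one _
  · exact A2.r_one _

lemma letter_ax3 {c x d : D1 ⊕ D2} (hcx : sameF c x) (hxd : sameF x d) :
    lmulL A1 A2 c (rmulL A1 A2 x d) = rmulL A1 A2 (lmulL A1 A2 c x) d := by
  cases c <;> cases x <;> cases d <;> simp [sameF] at hcx hxd <;> simp [lmulL, rmulL]
  · exact A1.ax3 _ _ _
  · exact A2.ax3 _ _ _

lemma giL_inJ (x : D1 ⊕ D2) : inJ A1 A2 (giL A1 A2 x) := by
  cases x <;> simp [giL, inJ]
  · exact ginv_mem A1 _
  · exact ginv_mem A2 _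

lemma sameF_giL (x : D1 ⊕ D2) : sameF x (giL A1 A2 x) := by
  cases x <;> simp [giL, sameF]

lemma lmul_giL (x : D1 ⊕ D2) : unitL A1 A2 (lmulL A1 A2 x (giL A1 A2 x)) := by
  cases x <;> simp [giL, lmulL, unitL]
  · exact g_l_ginv A1 _
  · exact g_l_ginv A2 _

lemma giL_lmul {x : D1 ⊕ D2} (hx : inJ A1 A2 x) :
    unitL A1 A2 (lmulL A1 A2 (giL A1 A2 x) x) := by
  cases x <;> simp [giL, lmulL, unitL] <;> simp [inJ] at hx
  · exact g_ginv_l A1 hx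
  · exact g_ginv_l A2 hx

lemma giL_notunit {x : D1 ⊕ D2} (hx : inJ A1 A2 x) (h : ¬ unitL A1 A2 x) :
    ¬ unitL A1 A2 (giL A1 A2 x) := by
  cases x <;> simp [giL, unitL] at h ⊢ <;> simp [inJ] at hx
  · exact g_ginv_notunit A1 hx h
  · exact g_ginv_notunit A2 hx h

lemma sameF_comm {x y : D1 ⊕ D2} (h : sameF x y) : sameF y x := h.symm

lemma sameF_trans {x y z : D1 ⊕ D2} (h : sameF x y) (h' : sameF y z) : sameF x z :=
  h.trans h'

lemma inJ_one : inJ A1 A2 (Sum.inl A1.one : D1 ⊕ D2) := g_one_mem A1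

lemma unit_one : unitL A1 A2 (Sum.inl A1.one : D1 ⊕ D2) := rfl

end LetterLemmas

section PushLemmas

variable {D1 D2 : Type} (A1 : DigroupStruct D1) (A2 : DigroupStruct D2)

/-- Good words: letters in `J`, no units, alternating factors. -/
def GoodW (w : List (D1 ⊕ D2)) : Prop :=
  (∀ c ∈ w, inJ A1 A2 c ∧ ¬ unitL A1 A2 c) ∧ w.Chain' (fun a b => ¬ sameF a b)

variable {A1 A2}

lemma goodW_nil : GoodW A1 A2 [] := ⟨by simp, List.isChain_nil⟩

lemma getLast?_some_eq {B : List (D1 ⊕ D2)} {y : D1 ⊕ D2} (h : B.getLast? = some y) :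
    B = B.dropLast ++ [y] := by
  have hne : B ≠ [] := by rintro rfl; simp at h
  rw [List.getLast?_eq_getLast hne, Option.some_inj] at h
  conv_lhs => rw [← List.dropLast_append_getLast hne]
  rw [h]

lemma mem_of_getLast?_eq {B : List (D1 ⊕ D2)} {y : D1 ⊕ D2}
    (h : B.getLast? = some y) : y ∈ B :=
  List.mem_of_mem_getLast? (by rw [h]; rfl)

lemma goodW_dropLast {B : List (D1 ⊕ D2)} (hB : GoodW A1 A2 B) :
    GoodW A1 A2 B.dropLast := by
  refine ⟨fun c hc => hB.1 c (List.dropLast_subset B hc), ?_⟩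
  exact hB.2.prefix (List.dropLast_prefix B)

lemma goodW_last_mem {B : List (D1 ⊕ D2)} {c : D1 ⊕ D2} (hB : GoodW A1 A2 B)
    (h : B.getLast? = some c) : inJ A1 A2 c ∧ ¬ unitL A1 A2 c :=
  hB.1 c (mem_of_getLast?_eq h)

lemma goodW_last_pair {B : List (D1 ⊕ D2)} {c d : D1 ⊕ D2} (hB : GoodW A1 A2 B)
    (h : B.getLast? = some c) (h' : B.dropLast.getLast? = some d) : ¬ sameF d c := by
  have hBeq := getLast?_some_eq h
  have := hB.2
  rw [hBeq] at this
  unfold List.Chain' at this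
  rw [List.isChain_append] at this
  exact this.2.2 d h' c rfl

lemma goodW_concat {B : List (D1 ⊕ D2)} {x : D1 ⊕ D2} (hB : GoodW A1 A2 B)
    (hx : inJ A1 A2 x) (hxu : ¬ unitL A1 A2 x)
    (hlast : ∀ y ∈ B.getLast?, ¬ sameF y x) : GoodW A1 A2 (B ++ [x]) := by
  constructor
  · intro c hc
    rcases List.mem_append.mp hc with h | h
    · exact hB.1 c h
    · simp at h; subst h; exact ⟨hx, hxu⟩
  · unfold List.Chain'
    rw [List.isChain_append]
    exact ⟨hB.2, List.isChain_singleton x, fun y hy z hz => by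
      simp at hz; subst hz; exact hlast y hy⟩

/-! Computation lemmas for `push`. -/

lemma push_unit {acc : List (D1 ⊕ D2)} {x : D1 ⊕ D2} (h : unitL A1 A2 x) :
    push A1 A2 acc x = acc := by
  unfold push; rw [if_pos h]

lemma push_nil {x : D1 ⊕ D2} (h : ¬ unitL A1 A2 x) : push A1 A2 [] x = [x] := by
  unfold push; rw [if_neg h]; rfl

lemma push_none {acc : List (D1 ⊕ D2)} {x : D1 ⊕ D2} (h : ¬ unitL A1 A2 x)
    (ha : acc.getLast? = none) : push A1 A2 acc x = [x] := by
  unfold push; rw [if_neg h]; rw [ha]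

lemma push_merge_unit {acc : List (D1 ⊕ D2)} {x y : D1 ⊕ D2} (h : ¬ unitL A1 A2 x)
    (ha : acc.getLast? = some y) (hs : sameF y x)
    (hu : unitL A1 A2 (lmulL A1 A2 y x)) : push A1 A2 acc x = acc.dropLast := by
  unfold push; rw [if_neg h]; rw [ha]; simp only [if_pos hs, if_pos hu]

lemma push_merge {acc : List (D1 ⊕ D2)} {x y : D1 ⊕ D2} (h : ¬ unitL A1 A2 x)
    (ha : acc.getLast? = some y) (hs : sameF y x)
    (hu : ¬ unitL A1 A2 (lmulL A1 A2 y x)) :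
    push A1 A2 acc x = acc.dropLast ++ [lmulL A1 A2 y x] := by
  unfold push; rw [if_neg h]; rw [ha]; simp only [if_pos hs, if_neg hu]

lemma push_app {acc : List (D1 ⊕ D2)} {x y : D1 ⊕ D2} (h : ¬ unitL A1 A2 x)
    (ha : acc.getLast? = some y) (hs : ¬ sameF y x) :
    push A1 A2 acc x = acc ++ [x] := by
  unfold push; rw [if_neg h]; rw [ha]; simp only [if_neg hs]

lemma good_push {B : List (D1 ⊕ D2)} {x : D1 ⊕ D2} (hB : GoodW A1 A2 B)
    (hx : inJ A1 A2 x) : GoodW A1 A2 (push A1 A2 B x) := by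
  by_cases hxu : unitL A1 A2 x
  · rw [push_unit hxu]; exact hB
  cases hl : B.getLast? with
  | none => rw [push_none hxu hl]
            exact goodW_concat goodW_nil hx hxu (by simp)
  | some c =>
    have hc := goodW_last_mem hB hl
    by_cases hs : sameF c x
    · by_cases hu : unitL A1 A2 (lmulL A1 A2 c x)
      · rw [push_merge_unit hxu hl hs hu]; exact goodW_dropLast hB
      · rw [push_merge hxu hl hs hu]
        refine goodW_concat (goodW_dropLast hB) (inJ_lmul hx hs) hu ?_
        intro d hd hsd
        exact goodW_last_pair hB hl hd
          (sameF_trans hsd (sameF_lmul hs))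
    · rw [push_app hxu hl hs]
      refine goodW_concat hB hx hxu ?_
      intro d hd hsd
      rw [hl] at hd; simp at hd; subst hd; exact hs hsd

lemma good_foldl_push {B : List (D1 ⊕ D2)} {w : List (D1 ⊕ D2)} (hB : GoodW A1 A2 B)
    (hw : ∀ c ∈ w, inJ A1 A2 c) : GoodW A1 A2 (w.foldl (push A1 A2) B) := by
  induction w generalizing B with
  | nil => exact hB
  | cons a w ih =>
    exact ih (good_push hB (hw a (by simp))) (fun c hc => hw c (by simp [hc]))

lemma foldl_push_of_good {w B : List (D1 ⊕ D2)} (h : GoodW A1 A2 (B ++ w)) :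
    w.foldl (push A1 A2) B = B ++ w := by
  induction w generalizing B with
  | nil => simp
  | cons a w ih =>
    have ha := h.1 a (by simp)
    have hpush : push A1 A2 B a = B ++ [a] := by
      cases hl : B.getLast? with
      | none => rw [push_none ha.2 hl]
                rw [List.getLast?_eq_none_iff] at hl; rw [hl]; rfl
      | some y =>
        refine push_app ha.2 hl ?_
        have := h.2
        unfold List.Chain' at this
        rw [List.isChain_append (l₁ := B) (l₂ := a :: w)] at this
        exact this.2.2 y hl a rfl
    rw [List.foldl_cons, hpush, List.append_cons B a w] at *
    exact ih h

lemma reduceW_good {w : List (D1 ⊕ D2)} (hw : ∀ c ∈ w, inJ A1 A2 c) :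
    GoodW A1 A2 (reduceW A1 A2 w) :=
  good_foldl_push goodW_nil hw

lemma reduceW_eq_self {w : List (D1 ⊕ D2)} (h : GoodW A1 A2 w) :
    reduceW A1 A2 w = w :=
  foldl_push_of_good (by simpa using h)

/-- The key local lemma: pushing two letters of the same factor equals pushing
their product. -/
lemma push_push {B : List (D1 ⊕ D2)} {x y : D1 ⊕ D2} (hB : GoodW A1 A2 B)
    (hx : inJ A1 A2 x) (hy : inJ A1 A2 y) (hs : sameF x y) :
    push A1 A2 (push A1 A2 B x) y = push A1 A2 B (lmulL A1 A2 x y) := by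
  by_cases hux : unitL A1 A2 x
  · rw [push_unit hux, one_lmul hux hs]
  by_cases huy : unitL A1 A2 y
  · rw [push_unit huy, lmul_one huy hs hx]
  cases hl : B.getLast? with
  | none =>
    have hBnil : B = [] := List.getLast?_eq_none_iff.mp hl
    subst hBnil
    rw [push_nil hux]
    by_cases hu : unitL A1 A2 (lmulL A1 A2 x y)
    · rw [push_merge_unit huy (by rfl) hs hu, push_unit hu]; rfl
    · rw [push_merge huy (by rfl) hs hu, push_nil hu]; rfl
  | some c =>
    obtain ⟨hcJ, hcu⟩ := goodW_last_mem hB hl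
    by_cases hcx : sameF c x
    · have hcy : sameF c y := sameF_trans hcx hs
      have hclx_x : sameF (lmulL A1 A2 c x) x := sameF_trans (sameF_lmul hcx) hcx
      by_cases hu1 : unitL A1 A2 (lmulL A1 A2 c x)
      · -- c ⊢ x = e
        rw [push_merge_unit hux hl hcx hu1]
        have key : lmulL A1 A2 c (lmulL A1 A2 x y) = y := by
          rw [← lmul_assoc hcx hs, one_lmul hu1 (sameF_trans hclx_x hs)]
        have hcly : sameF c (lmulL A1 A2 x y) :=
          sameF_trans hcy (sameF_comm (sameF_trans (sameF_lmul hs) hs))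
        by_cases hu2 : unitL A1 A2 (lmulL A1 A2 x y)
        · -- y = c
          have hyc : y = c := by
            rw [← key, lmul_one hu2 hcly hcJ]
          subst hyc
          rw [push_unit hu2]
          cases hl2 : B.dropLast.getLast? with
          | none =>
            rw [push_none huy hl2]
            rw [List.getLast?_eq_none_iff] at hl2
            rw [getLast?_some_eq hl, hl2]; rfl
          | some d =>
            have hdc := goodW_last_pair hB hl hl2
            rw [push_app huy hl2 hdc]
            exact (getLast?_some_eq hl).symm
        · rw [push_merge hu2 hl hcly (by rw [key]; exact huy), key]
          cases hl2 : B.dropLast.getLast? with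
          | none =>
            rw [push_none huy hl2]
            rw [List.getLast?_eq_none_iff] at hl2
            rw [hl2]; rfl
          | some d =>
            have hdc := goodW_last_pair hB hl hl2
            exact push_app huy hl2 (fun hdy => hdc (sameF_trans hdy (sameF_comm hcy)))
      · -- c ⊢ x ≠ e
        rw [push_merge hux hl hcx hu1]
        have hlast2 : (B.dropLast ++ [lmulL A1 A2 c x]).getLast? = some (lmulL A1 A2 c x) :=
          List.getLast?_concat
        have hsx : sameF (lmulL A1 A2 c x) y := sameF_trans hclx_x hs
        have hcly : sameF c (lmulL A1 A2 x y) :=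
          sameF_trans hcy (sameF_comm (sameF_trans (sameF_lmul hs) hs))
        have hassoc : lmulL A1 A2 (lmulL A1 A2 c x) y = lmulL A1 A2 c (lmulL A1 A2 x y) :=
          lmul_assoc hcx hs
        by_cases hu2 : unitL A1 A2 (lmulL A1 A2 x y)
        · -- x ⊢ y = e : result should be B
          have hclxy : lmulL A1 A2 c (lmulL A1 A2 x y) = c := lmul_one hu2 hcly hcJ
          have hu3 : ¬ unitL A1 A2 (lmulL A1 A2 (lmulL A1 A2 c x) y) := by
            rw [hassoc, hclxy]; exact hcu
          rw [push_merge huy hlast2 hsx hu3, List.dropLast_concat, hassoc, hclxy,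
            push_unit hu2]
          exact (getLast?_some_eq hl).symm
        · by_cases hu3 : unitL A1 A2 (lmulL A1 A2 (lmulL A1 A2 c x) y)
          · rw [push_merge_unit huy hlast2 hsx hu3, List.dropLast_concat,
              push_merge_unit hu2 hl hcly (by rw [← hassoc]; exact hu3)]
          · rw [push_merge huy hlast2 hsx hu3, List.dropLast_concat,
              push_merge hu2 hl hcly (by rw [← hassoc]; exact hu3), hassoc]
    · -- ¬ sameF c x
      rw [push_app hux hl hcx]
      have hlast2 : (B ++ [x]).getLast? = some x := List.getLast?_concat
      by_cases hu2 : unitL A1 A2 (lmulL A1 A2 x y)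
      · rw [push_merge_unit huy hlast2 hs hu2, List.dropLast_concat, push_unit hu2]
      · rw [push_merge huy hlast2 hs hu2, List.dropLast_concat,
          push_app hu2 hl (fun h => hcx (sameF_trans h (sameF_lmul hs)))]

end PushLemmas

section PushLemmas2

variable {D1 D2 : Type} {A1 : DigroupStruct D1} {A2 : DigroupStruct D2}

lemma goodW_tail {d : D1 ⊕ D2} {u : List (D1 ⊕ D2)} (h : GoodW A1 A2 (d :: u)) :
    GoodW A1 A2 u :=
  ⟨fun c hc => h.1 c (by simp [hc]), h.2.tail⟩

lemma goodW_cons_of {d e : D1 ⊕ D2} {u : List (D1 ⊕ D2)}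
    (h : GoodW A1 A2 (d :: u)) (he : inJ A1 A2 e) (heu : ¬ unitL A1 A2 e)
    (hed : sameF e d) : GoodW A1 A2 (e :: u) := by
  constructor
  · intro c hc
    rcases List.mem_cons.mp hc with rfl | hc
    · exact ⟨he, heu⟩
    · exact h.1 c (by simp [hc])
  · unfold List.Chain'
    rw [List.isChain_cons]
    refine ⟨fun b hb => ?_, (h.2).tail⟩
    have := (List.isChain_cons.mp h.2).1 b hb
    exact fun hc => this (sameF_trans (sameF_comm hed) hc)

lemma foldl_push_push {acc r : List (D1 ⊕ D2)} {x : D1 ⊕ D2}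
    (hacc : GoodW A1 A2 acc) (hr : GoodW A1 A2 r) (hx : inJ A1 A2 x) :
    (push A1 A2 r x).foldl (push A1 A2) acc
      = push A1 A2 (r.foldl (push A1 A2) acc) x := by
  by_cases hxu : unitL A1 A2 x
  · rw [push_unit hxu, push_unit hxu]
  cases hl : r.getLast? with
  | none =>
    rw [List.getLast?_eq_none_iff] at hl; subst hl
    rw [push_nil hxu]; rfl
  | some y =>
    obtain ⟨hyJ, hyu⟩ := goodW_last_mem hr hl
    have hrd : r = r.dropLast ++ [y] := getLast?_some_eq hl
    have hAgood : GoodW A1 A2 (r.dropLast.foldl (push A1 A2) acc) :=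
      good_foldl_push hacc (fun c hc => (hr.1 c (List.dropLast_subset r hc)).1)
    have hfold : r.foldl (push A1 A2) acc
        = push A1 A2 (r.dropLast.foldl (push A1 A2) acc) y := by
      conv_lhs => rw [hrd]
      rw [List.foldl_append]; rfl
    by_cases hsy : sameF y x
    · by_cases hu : unitL A1 A2 (lmulL A1 A2 y x)
      · rw [push_merge_unit hxu hl hsy hu, hfold, push_push hAgood hyJ hx hsy,
          push_unit hu]
      · rw [push_merge hxu hl hsy hu, List.foldl_append, hfold,
          push_push hAgood hyJ hx hsy]
        rfl
    · rw [push_app hxu hl hsy, List.foldl_append]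
      rfl

lemma foldl_push_reduceW {acc v : List (D1 ⊕ D2)} (hacc : GoodW A1 A2 acc)
    (hv : ∀ c ∈ v, inJ A1 A2 c) :
    v.foldl (push A1 A2) acc = (reduceW A1 A2 v).foldl (push A1 A2) acc := by
  induction v using List.reverseRecOn with
  | nil => rfl
  | append_singleton v₀ x ih =>
    have hv₀ : ∀ c ∈ v₀, inJ A1 A2 c := fun c hc => hv c (by simp [hc])
    have hx : inJ A1 A2 x := hv x (by simp)
    have hred : reduceW A1 A2 (v₀ ++ [x]) = push A1 A2 (reduceW A1 A2 v₀) x := by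
      unfold reduceW; rw [List.foldl_append]; rfl
    rw [hred, foldl_push_push hacc (reduceW_good hv₀) hx, List.foldl_append,
      ih hv₀]
    rfl

lemma reduceW_append (u v : List (D1 ⊕ D2)) :
    reduceW A1 A2 (u ++ v) = v.foldl (push A1 A2) (reduceW A1 A2 u) := by
  unfold reduceW; rw [List.foldl_append]

lemma foldl_push_assoc {a b c : List (D1 ⊕ D2)} (ha : GoodW A1 A2 a)
    (hb : GoodW A1 A2 b) (hbJ : ∀ x ∈ b, inJ A1 A2 x) (hcJ : ∀ x ∈ c, inJ A1 A2 x) :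
    (c.foldl (push A1 A2) b).foldl (push A1 A2) a
      = c.foldl (push A1 A2) (b.foldl (push A1 A2) a) := by
  have h1 : c.foldl (push A1 A2) b = reduceW A1 A2 (b ++ c) := by
    rw [reduceW_append, reduceW_eq_self hb]
  have h2 : ∀ x ∈ b ++ c, inJ A1 A2 x := by
    intro x hx; rcases List.mem_append.mp hx with h | h
    · exact hbJ x h
    · exact hcJ x h
  rw [h1, ← foldl_push_reduceW ha h2, List.foldl_append]

/-- Prepending one letter to a reduced word. -/
noncomputable def consP (A1 : DigroupStruct D1) (A2 : DigroupStruct D2)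
    (c : D1 ⊕ D2) (u : List (D1 ⊕ D2)) : List (D1 ⊕ D2) :=
  match u with
  | [] => [c]
  | d :: u' =>
    if sameF c d then
      (if unitL A1 A2 (lmulL A1 A2 c d) then u' else lmulL A1 A2 c d :: u')
    else c :: d :: u'

lemma consP_spec {c : D1 ⊕ D2} {u : List (D1 ⊕ D2)} (hu : GoodW A1 A2 u)
    (hc : inJ A1 A2 c) (hcu : ¬ unitL A1 A2 c) :
    u.foldl (push A1 A2) [c] = consP A1 A2 c u := by
  cases u with
  | nil => rfl
  | cons d u' =>
    obtain ⟨hdJ, hdu⟩ := hu.1 d (by simp)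
    have hlast : ([c] : List (D1 ⊕ D2)).getLast? = some c := rfl
    rw [List.foldl_cons]
    have hcp : consP A1 A2 c (d :: u')
        = if sameF c d then
            (if unitL A1 A2 (lmulL A1 A2 c d) then u' else lmulL A1 A2 c d :: u')
          else c :: d :: u' := rfl
    rw [hcp]
    by_cases hs : sameF c d
    · by_cases hun : unitL A1 A2 (lmulL A1 A2 c d)
      · rw [push_merge_unit hdu hlast hs hun, if_pos hs, if_pos hun]
        show reduceW A1 A2 u' = u'
        exact reduceW_eq_self (goodW_tail hu)
      · rw [push_merge hdu hlast hs hun, if_pos hs, if_neg hun]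
        show u'.foldl (push A1 A2) [lmulL A1 A2 c d] = _
        have : GoodW A1 A2 (lmulL A1 A2 c d :: u') :=
          goodW_cons_of hu (inJ_lmul hdJ hs) hun (sameF_trans (sameF_lmul hs) hs)
        exact foldl_push_of_good (B := [lmulL A1 A2 c d]) (by simpa using this)
    · rw [push_app hdu hlast hs, if_neg hs]
      show u'.foldl (push A1 A2) [c, d] = _
      have hgood : GoodW A1 A2 (c :: d :: u') := by
        constructor
        · intro e he
          rcases List.mem_cons.mp he with rfl | he
          · exact ⟨hc, hcu⟩
          · exact hu.1 e he
        · unfold List.Chain'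
          rw [List.isChain_cons]
          exact ⟨fun b hb => by simp at hb; subst hb; exact hs, hu.2⟩
      exact foldl_push_of_good (B := [c, d]) (by simpa using hgood)

/-- inverse of a reduced word -/
noncomputable def invW (A1 : DigroupStruct D1) (A2 : DigroupStruct D2)
    (v : List (D1 ⊕ D2)) : List (D1 ⊕ D2) :=
  (v.map (giL A1 A2)).reverse

lemma giL_isLeft (x : D1 ⊕ D2) : (giL A1 A2 x).isLeft = x.isLeft := by
  cases x <;> rfl

lemma goodW_invW {v : List (D1 ⊕ D2)} (hv : GoodW A1 A2 v) :
    GoodW A1 A2 (invW A1 A2 v) := by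
  constructor
  · intro c hc
    simp only [invW, List.mem_reverse, List.mem_map] at hc
    obtain ⟨a, ha, rfl⟩ := hc
    exact ⟨giL_inJ a, giL_notunit (hv.1 a ha).1 (hv.1 a ha).2⟩
  · unfold invW
    unfold List.Chain'
    rw [List.isChain_reverse, List.isChain_map]
    refine hv.2.imp ?_
    intro a b hab hc
    apply hab
    have hba : b.isLeft = a.isLeft := by
      rw [← giL_isLeft (A1 := A1) (A2 := A2) b, ← giL_isLeft (A1 := A1) (A2 := A2) a]
      exact hc
    exact hba.symm

lemma invW_concat (v : List (D1 ⊕ D2)) (y : D1 ⊕ D2) :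
    invW A1 A2 (v ++ [y]) = giL A1 A2 y :: invW A1 A2 v := by
  simp [invW]

lemma invW_cons (v : List (D1 ⊕ D2)) (y : D1 ⊕ D2) :
    invW A1 A2 (y :: v) = invW A1 A2 v ++ [giL A1 A2 y] := by
  simp [invW]

lemma cancel_right {v : List (D1 ⊕ D2)} (hv : GoodW A1 A2 v) :
    (invW A1 A2 v).foldl (push A1 A2) v = [] := by
  induction v using List.reverseRecOn with
  | nil => rfl
  | append_singleton v₀ y ih =>
    obtain ⟨hyJ, hyu⟩ := hv.1 y (by simp)
    have hv₀ : GoodW A1 A2 v₀ := by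
      have := goodW_dropLast hv
      rwa [List.dropLast_concat] at this
    rw [invW_concat, List.foldl_cons,
      push_merge_unit (giL_notunit hyJ hyu) (List.getLast?_concat)
        (sameF_giL y) (lmul_giL y),
      List.dropLast_concat]
    exact ih hv₀

lemma cancel_left {v : List (D1 ⊕ D2)} (hv : GoodW A1 A2 v) :
    v.foldl (push A1 A2) (invW A1 A2 v) = [] := by
  induction v with
  | nil => rfl
  | cons y v₀ ih =>
    obtain ⟨hyJ, hyu⟩ := hv.1 y (by simp)
    rw [invW_cons, List.foldl_cons,
      push_merge_unit hyu (List.getLast?_concat)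
        (sameF_comm (sameF_giL y)) (giL_lmul hyJ),
      List.dropLast_concat]
    exact ih (goodW_tail hv)

/-! ### hat lemmas -/

lemma map_tau_of_inJ {w : List (D1 ⊕ D2)} (h : ∀ c ∈ w, inJ A1 A2 c) :
    w.map (tauL A1 A2) = w := by
  induction w with
  | nil => rfl
  | cons a w ih =>
    simp only [List.map_cons]
    rw [tau_inJ (h a (by simp)), ih (fun c hc => h c (by simp [hc]))]

end PushLemmas2

section OmegaLayer

variable {D1 D2 : Type} {A1 : DigroupStruct D1} {A2 : DigroupStruct D2}

lemma tau_isLeft (x : D1 ⊕ D2) : (tauL A1 A2 x).isLeft = x.isLeft := by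
  unfold tauL
  split
  · rfl
  · cases x <;> rfl

lemma sameF_tau {c x : D1 ⊕ D2} (h : sameF c x) : sameF c (tauL A1 A2 x) := by
  unfold sameF at *
  rw [tau_isLeft]; exact h

lemma sameF_tau' (x : D1 ⊕ D2) : sameF (tauL A1 A2 x) x := by
  unfold sameF; rw [tau_isLeft]

lemma notJ_notunit {x : D1 ⊕ D2} (h : ¬ inJ A1 A2 x) : ¬ unitL A1 A2 x :=
  fun hu => h (unit_inJ hu)

/-- the `Ω₁`-condition used by the operations -/
def CondO (A1 : DigroupStruct D1) (A2 : DigroupStruct D2)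
    (z : List (D1 ⊕ D2) × ℕ) : Prop :=
  z.2 = 1 ∧ ∀ c ∈ z.1, inJ A1 A2 c

/-- explicit decomposition of an `Ω₂` element -/
def IsDec (A1 : DigroupStruct D1) (A2 : DigroupStruct D2)
    (z : List (D1 ⊕ D2) × ℕ) (p : List (D1 ⊕ D2)) (x : D1 ⊕ D2)
    (q : List (D1 ⊕ D2)) : Prop :=
  z.1 = p ++ x :: q ∧ z.2 = p.length + 1 ∧ ¬ inJ A1 A2 x ∧
    GoodW A1 A2 p ∧ GoodW A1 A2 q ∧
    (∀ c ∈ p.getLast?, ¬ sameF c x) ∧ (∀ c ∈ q.head?, ¬ sameF x c)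

lemma goodW_iff {w : List (D1 ⊕ D2)} :
    GoodW A1 A2 w ↔ (AltRed A1 A2 w ∧ ∀ c ∈ w, inJ A1 A2 c) := by
  constructor
  · intro h
    exact ⟨⟨fun c hc => (h.1 c hc).2, h.2⟩, fun c hc => (h.1 c hc).1⟩
  · rintro ⟨⟨h1, h2⟩, h3⟩
    exact ⟨fun c hc => ⟨h3 c hc, h1 c hc⟩, h2⟩

lemma not_cond_of_isDec {z : List (D1 ⊕ D2) × ℕ} {p x q} (h : IsDec A1 A2 z p x q) :
    ¬ CondO A1 A2 z := by
  rintro ⟨-, hall⟩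
  exact h.2.2.1 (hall x (by rw [h.1]; simp))

lemma isDec_of_parts {p q : List (D1 ⊕ D2)} {x : D1 ⊕ D2}
    (hp : GoodW A1 A2 p) (hq : GoodW A1 A2 q) (hx : ¬ inJ A1 A2 x)
    (hpx : ∀ c ∈ p.getLast?, ¬ sameF c x) (hxq : ∀ c ∈ q.head?, ¬ sameF x c) :
    IsDec A1 A2 (p ++ x :: q, p.length + 1) p x q :=
  ⟨rfl, rfl, hx, hp, hq, hpx, hxq⟩

lemma mem_of_isDec {z : List (D1 ⊕ D2) × ℕ} {p x q} (h : IsDec A1 A2 z p x q) :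
    InOmega A1 A2 z := by
  obtain ⟨hw, hn, hx, hp, hq, hpx, hxq⟩ := h
  refine Or.inr ⟨p, x, q, hw, hn, hx, fun c hc => (hp.1 c hc).1,
    fun c hc => (hq.1 c hc).1, ?_⟩
  rw [hw]
  constructor
  · intro c hc
    rcases List.mem_append.mp hc with hc | hc
    · exact (hp.1 c hc).2
    · rcases List.mem_cons.mp hc with rfl | hc
      · exact notJ_notunit hx
      · exact (hq.1 c hc).2
  · unfold List.Chain'
    rw [List.isChain_append]
    refine ⟨hp.2, ?_, ?_⟩
    · rw [List.isChain_cons]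
      exact ⟨fun b hb => hxq b hb, hq.2⟩
    · intro c hc y hy
      simp at hy; subst hy
      exact hpx c hc

lemma omega_cases {z : List (D1 ⊕ D2) × ℕ} (hz : InOmega A1 A2 z) :
    (CondO A1 A2 z ∧ (z.1 = [Sum.inl A1.one] ∨ (z.1 ≠ [] ∧ GoodW A1 A2 z.1))) ∨
    (∃ p x q, IsDec A1 A2 z p x q) := by
  rcases hz with ⟨h2, hc⟩ | ⟨p, x, q, hw, hn, hx, hp, hq, halt⟩
  · rcases hc with hc | ⟨hne, halt, hall⟩
    · refine Or.inl ⟨⟨h2, fun c hcc => ?_⟩, Or.inl hc⟩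
      rw [hc] at hcc; simp at hcc; subst hcc; exact inJ_one
    · exact Or.inl ⟨⟨h2, hall⟩, Or.inr ⟨hne, goodW_iff.mpr ⟨halt, hall⟩⟩⟩
  · right
    have hunit : ∀ c ∈ p ++ x :: q, ¬ unitL A1 A2 c := by rw [← hw]; exact halt.1
    have hchain := halt.2
    unfold List.Chain' at hchain
    rw [hw, List.isChain_append] at hchain
    obtain ⟨hcp, hcxq, hjun⟩ := hchain
    rw [List.isChain_cons] at hcxq
    refine ⟨p, x, q, hw, hn, hx, ?_, ?_, ?_, hcxq.1⟩
    · exact ⟨fun c hc => ⟨hp c hc, hunit c (by simp [hc])⟩, hcp⟩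
    · exact ⟨fun c hc => ⟨hq c hc, hunit c (by simp [hc])⟩, hcxq.2⟩
    · intro c hc
      exact hjun c hc x rfl

/-! ### glue functions -/

/-- attach a reduced word on the left of the distinguished letter -/
noncomputable def glueL (A1 : DigroupStruct D1) (A2 : DigroupStruct D2)
    (r : List (D1 ⊕ D2)) (x : D1 ⊕ D2) (q : List (D1 ⊕ D2)) :
    List (D1 ⊕ D2) × ℕ :=
  match r.getLast? with
  | none => (x :: q, 1)
  | some c =>
    if sameF c x then
      (r.dropLast ++ lmulL A1 A2 c x :: q, r.dropLast.length + 1)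
    else (r ++ x :: q, r.length + 1)

/-- attach a reduced word on the right of the distinguished letter -/
noncomputable def glueR (A1 : DigroupStruct D1) (A2 : DigroupStruct D2)
    (p : List (D1 ⊕ D2)) (x : D1 ⊕ D2) (r : List (D1 ⊕ D2)) :
    List (D1 ⊕ D2) × ℕ :=
  match r with
  | [] => (p ++ [x], p.length + 1)
  | c :: v =>
    if sameF x c then (p ++ rmulL A1 A2 x c :: v, p.length + 1)
    else (p ++ x :: c :: v, p.length + 1)

lemma glueL_none {r : List (D1 ⊕ D2)} {x q} (h : r.getLast? = none) :
    glueL A1 A2 r x q = (x :: q, 1) := by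
  unfold glueL; rw [h]

lemma glueL_merge {r : List (D1 ⊕ D2)} {c x q} (h : r.getLast? = some c)
    (hs : sameF c x) :
    glueL A1 A2 r x q = (r.dropLast ++ lmulL A1 A2 c x :: q, r.dropLast.length + 1) := by
  unfold glueL; rw [h]; exact if_pos hs

lemma glueL_app {r : List (D1 ⊕ D2)} {c x q} (h : r.getLast? = some c)
    (hs : ¬ sameF c x) :
    glueL A1 A2 r x q = (r ++ x :: q, r.length + 1) := by
  unfold glueL; rw [h]; exact if_neg hs

lemma glueR_nil {p : List (D1 ⊕ D2)} {x} :
    glueR A1 A2 p x [] = (p ++ [x], p.length + 1) := rfl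

lemma glueR_merge {p : List (D1 ⊕ D2)} {x c v} (hs : sameF x c) :
    glueR A1 A2 p x (c :: v) = (p ++ rmulL A1 A2 x c :: v, p.length + 1) := by
  unfold glueR
  exact if_pos hs

lemma glueR_app {p : List (D1 ⊕ D2)} {x c v} (hs : ¬ sameF x c) :
    glueR A1 A2 p x (c :: v) = (p ++ x :: c :: v, p.length + 1) := by
  unfold glueR
  exact if_neg hs

/-! ### list extraction lemmas -/

lemma take_pxq (p q : List (D1 ⊕ D2)) (x : D1 ⊕ D2) :
    (p ++ x :: q).take (p.length + 1 - 1) = p := by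
  simp

lemma getD_pxq (p q : List (D1 ⊕ D2)) (x d : D1 ⊕ D2) :
    (p ++ x :: q).getD (p.length + 1 - 1) d = x := by
  simp only [Nat.add_sub_cancel, List.getD_eq_getElem?_getD,
    List.getElem?_append_right (le_refl p.length), Nat.sub_self]
  simp

lemma drop_pxq (p q : List (D1 ⊕ D2)) (x : D1 ⊕ D2) :
    (p ++ x :: q).drop (p.length + 1) = q := by
  rw [show p ++ x :: q = (p ++ [x]) ++ q by simp,
    show p.length + 1 = (p ++ [x]).length by simp]
  exact List.drop_left

end OmegaLayer

section OmegaLayer2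

variable {D1 D2 : Type} {A1 : DigroupStruct D1} {A2 : DigroupStruct D2}

lemma hatW_good (w : List (D1 ⊕ D2)) : GoodW A1 A2 (hatW A1 A2 w) :=
  reduceW_good (fun c hc => by
    obtain ⟨a, -, rfl⟩ := List.mem_map.mp hc
    exact inJ_tau a)

lemma hatW_append (u v : List (D1 ⊕ D2)) :
    hatW A1 A2 (u ++ v) = (v.map (tauL A1 A2)).foldl (push A1 A2) (hatW A1 A2 u) := by
  unfold hatW
  rw [List.map_append, reduceW_append]

lemma hatW_append_hat (u v : List (D1 ⊕ D2)) :
    hatW A1 A2 (u ++ v) = (hatW A1 A2 v).foldl (push A1 A2) (hatW A1 A2 u) := by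
  rw [hatW_append]
  exact foldl_push_reduceW (hatW_good u)
    (fun c hc => by obtain ⟨a, -, rfl⟩ := List.mem_map.mp hc; exact inJ_tau a)

lemma hatW_of_good {w : List (D1 ⊕ D2)} (h : GoodW A1 A2 w) : hatW A1 A2 w = w := by
  unfold hatW
  rw [map_tau_of_inJ (fun c hc => (h.1 c hc).1), reduceW_eq_self h]

lemma map_tau_mid {u w : List (D1 ⊕ D2)} (y : D1 ⊕ D2)
    (hu : ∀ c ∈ u, inJ A1 A2 c) (hw : ∀ c ∈ w, inJ A1 A2 c) :
    (u ++ y :: w).map (tauL A1 A2) = u ++ tauL A1 A2 y :: w := by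
  rw [List.map_append, List.map_cons, map_tau_of_inJ hu, map_tau_of_inJ hw]

lemma reduceW_good_append {u w : List (D1 ⊕ D2)} (hu : GoodW A1 A2 u) :
    reduceW A1 A2 (u ++ w) = w.foldl (push A1 A2) u := by
  rw [reduceW_append, reduceW_eq_self hu]

lemma hatW_pxq {p q : List (D1 ⊕ D2)} (x : D1 ⊕ D2) (hp : GoodW A1 A2 p)
    (hq : GoodW A1 A2 q) :
    hatW A1 A2 (p ++ x :: q) = (tauL A1 A2 x :: q).foldl (push A1 A2) p := by
  unfold hatW
  rw [map_tau_mid x (fun c hc => (hp.1 c hc).1) (fun c hc => (hq.1 c hc).1),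
    reduceW_good_append hp]

lemma toRep_nil : toRep A1 ([] : List (D1 ⊕ D2)) = [Sum.inl A1.one] := rfl

lemma toRep_of_ne {s : List (D1 ⊕ D2)} (h : s ≠ []) : toRep A1 s = s := by
  unfold toRep; rw [if_neg h]

lemma hatW_one : hatW A1 A2 [Sum.inl A1.one] = [] := by
  unfold hatW
  rw [List.map_cons, List.map_nil, tau_inJ inJ_one]
  show push A1 A2 [] (Sum.inl A1.one) = []
  exact push_unit unit_one

lemma hatW_toRep {s : List (D1 ⊕ D2)} (hs : GoodW A1 A2 s) :
    hatW A1 A2 (toRep A1 s) = s := by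
  by_cases h : s = []
  · subst h; rw [toRep_nil, hatW_one]
  · rw [toRep_of_ne h, hatW_of_good hs]

lemma cond_toRep {s : List (D1 ⊕ D2)} (hs : GoodW A1 A2 s) :
    CondO A1 A2 (toRep A1 s, 1) := by
  refine ⟨rfl, ?_⟩
  by_cases h : s = []
  · subst h; rw [toRep_nil]
    intro c hc; simp at hc; subst hc; exact inJ_one
  · rw [toRep_of_ne h]; exact fun c hc => (hs.1 c hc).1

lemma mem_toRep {s : List (D1 ⊕ D2)} (hs : GoodW A1 A2 s) :
    InOmega A1 A2 (toRep A1 s, 1) := by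
  by_cases h : s = []
  · subst h; exact Or.inl ⟨rfl, Or.inl rfl⟩
  · rw [toRep_of_ne h]
    exact Or.inl ⟨rfl, Or.inr ⟨h, ((goodW_iff).mp hs).1, fun c hc => (hs.1 c hc).1⟩⟩

lemma omega1_val {z : List (D1 ⊕ D2) × ℕ} (hz : InOmega A1 A2 z)
    (hc : CondO A1 A2 z) : (toRep A1 (hatW A1 A2 z.1), 1) = z := by
  rcases omega_cases hz with ⟨-, h1 | ⟨hne, hg⟩⟩ | ⟨p, x, q, hd⟩
  · rw [h1, hatW_one, toRep_nil, ← h1]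
    exact Prod.ext rfl hc.1.symm
  · rw [hatW_of_good hg, toRep_of_ne hne]
    exact Prod.ext rfl hc.1.symm
  · exact absurd hc (not_cond_of_isDec hd)

/-! ### characterizations of the operations -/

lemma opL_eq_omega1 (z : List (D1 ⊕ D2) × ℕ) {z' : List (D1 ⊕ D2) × ℕ}
    (hc : CondO A1 A2 z') :
    opLspec A1 A2 z z'
      = (toRep A1 ((hatW A1 A2 z'.1).foldl (push A1 A2) (hatW A1 A2 z.1)), 1) := by
  unfold opLspec
  rw [if_pos (show z'.2 = 1 ∧ ∀ c ∈ z'.1, inJ A1 A2 c from hc), hatW_append_hat]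

lemma opR_eq_omega1 {z : List (D1 ⊕ D2) × ℕ} (z' : List (D1 ⊕ D2) × ℕ)
    (hc : CondO A1 A2 z) :
    opRspec A1 A2 z z'
      = (toRep A1 ((hatW A1 A2 z'.1).foldl (push A1 A2) (hatW A1 A2 z.1)), 1) := by
  unfold opRspec
  rw [if_pos (show z.2 = 1 ∧ ∀ c ∈ z.1, inJ A1 A2 c from hc), hatW_append_hat]

lemma opL_eq_omega2 (z : List (D1 ⊕ D2) × ℕ) {z' : List (D1 ⊕ D2) × ℕ}
    {p x q} (hd : IsDec A1 A2 z' p x q) :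
    opLspec A1 A2 z z'
      = glueL A1 A2 (p.foldl (push A1 A2) (hatW A1 A2 z.1)) x q := by
  obtain ⟨hw, hn, hx, hp, hq, hpx, hxq⟩ := hd
  have hcond : ¬ (z'.2 = 1 ∧ ∀ c ∈ z'.1, inJ A1 A2 c) :=
    not_cond_of_isDec ⟨hw, hn, hx, hp, hq, hpx, hxq⟩
  unfold opLspec
  rw [if_neg hcond]
  simp only [hw, hn, take_pxq, getD_pxq, drop_pxq]
  have hr : hatW A1 A2 (z.1 ++ p) = p.foldl (push A1 A2) (hatW A1 A2 z.1) := by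
    rw [hatW_append, map_tau_of_inJ (fun c hc => (hp.1 c hc).1)]
  rw [hr]
  rfl

lemma opR_eq_omega2 {z : List (D1 ⊕ D2) × ℕ} (z' : List (D1 ⊕ D2) × ℕ)
    {p x q} (hd : IsDec A1 A2 z p x q) :
    opRspec A1 A2 z z'
      = glueR A1 A2 p x ((hatW A1 A2 z'.1).foldl (push A1 A2) q) := by
  obtain ⟨hw, hn, hx, hp, hq, hpx, hxq⟩ := hd
  have hcond : ¬ (z.2 = 1 ∧ ∀ c ∈ z.1, inJ A1 A2 c) :=
    not_cond_of_isDec ⟨hw, hn, hx, hp, hq, hpx, hxq⟩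
  unfold opRspec
  rw [if_neg hcond]
  simp only [hw, hn, take_pxq, getD_pxq, drop_pxq]
  have hr : hatW A1 A2 (q ++ z'.1)
      = (hatW A1 A2 z'.1).foldl (push A1 A2) q := by
    rw [hatW_append_hat, hatW_of_good hq]
  rw [hr]
  rfl

/-! ### hat values of glue -/

lemma push_dropLast_last {r : List (D1 ⊕ D2)} {c} (hr : GoodW A1 A2 r)
    (hl : r.getLast? = some c) : push A1 A2 r.dropLast c = r := by
  obtain ⟨hcJ, hcu⟩ := goodW_last_mem hr hl
  cases hl2 : r.dropLast.getLast? with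
  | none =>
    rw [push_none hcu hl2]
    rw [List.getLast?_eq_none_iff] at hl2
    conv_rhs => rw [getLast?_some_eq hl, hl2]
    rfl
  | some d =>
    rw [push_app hcu hl2 (goodW_last_pair hr hl hl2)]
    exact (getLast?_some_eq hl).symm

lemma hat_glueL {r q : List (D1 ⊕ D2)} {x : D1 ⊕ D2} (hr : GoodW A1 A2 r)
    (hq : GoodW A1 A2 q) :
    hatW A1 A2 (glueL A1 A2 r x q).1
      = q.foldl (push A1 A2) (push A1 A2 r (tauL A1 A2 x)) := by
  cases hl : r.getLast? with
  | none =>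
    rw [List.getLast?_eq_none_iff] at hl
    subst hl
    rw [glueL_none (by simp)]
    show hatW A1 A2 (x :: q) = _
    rw [show (x :: q) = [] ++ x :: q from rfl, hatW_pxq x goodW_nil hq]
    rfl
  | some c =>
    obtain ⟨hcJ, hcu⟩ := goodW_last_mem hr hl
    by_cases hs : sameF c x
    · rw [glueL_merge hl hs]
      show hatW A1 A2 (r.dropLast ++ lmulL A1 A2 c x :: q) = _
      rw [hatW_pxq _ (goodW_dropLast hr) hq, tau_lmul hcJ hs, List.foldl_cons,
        ← push_push (goodW_dropLast hr) hcJ (inJ_tau x) (sameF_tau hs),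
        push_dropLast_last hr hl]
    · rw [glueL_app hl hs]
      show hatW A1 A2 (r ++ x :: q) = _
      rw [hatW_pxq x hr hq, List.foldl_cons]

lemma hat_glueR {p s : List (D1 ⊕ D2)} {x : D1 ⊕ D2} (hp : GoodW A1 A2 p)
    (hs : GoodW A1 A2 s) :
    hatW A1 A2 (glueR A1 A2 p x s).1
      = s.foldl (push A1 A2) (push A1 A2 p (tauL A1 A2 x)) := by
  cases s with
  | nil =>
    rw [glueR_nil]
    show hatW A1 A2 (p ++ x :: []) = _
    rw [hatW_pxq x hp goodW_nil, List.foldl_cons]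
  | cons c v =>
    obtain ⟨hcJ, hcu⟩ := hs.1 c (by simp)
    have hv : GoodW A1 A2 v := goodW_tail hs
    by_cases hsx : sameF x c
    · rw [glueR_merge hsx]
      show hatW A1 A2 (p ++ rmulL A1 A2 x c :: v) = _
      rw [hatW_pxq _ hp hv, tau_rmul hcJ hsx, List.foldl_cons, List.foldl_cons,
        ← push_push hp (inJ_tau x) hcJ (sameF_trans (sameF_tau' x) hsx)]
    · rw [glueR_app hsx]
      show hatW A1 A2 (p ++ x :: c :: v) = _
      rw [hatW_pxq x hp hs, List.foldl_cons, List.foldl_cons]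

/-! ### membership -/

lemma glueL_mem {r q : List (D1 ⊕ D2)} {x : D1 ⊕ D2} (hr : GoodW A1 A2 r)
    (hx : ¬ inJ A1 A2 x) (hq : GoodW A1 A2 q)
    (hxq : ∀ c ∈ q.head?, ¬ sameF x c) : InOmega A1 A2 (glueL A1 A2 r x q) := by
  cases hl : r.getLast? with
  | none =>
    rw [glueL_none hl]
    exact mem_of_isDec (p := []) (x := x) (q := q)
      ⟨rfl, rfl, hx, goodW_nil, hq, by simp, hxq⟩
  | some c =>
    obtain ⟨hcJ, hcu⟩ := goodW_last_mem hr hl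
    by_cases hs : sameF c x
    · rw [glueL_merge hl hs]
      refine mem_of_isDec (isDec_of_parts (goodW_dropLast hr) hq
        (notJ_lmul hcJ hx hs) ?_ ?_)
      · intro d hd hsd
        exact goodW_last_pair hr hl hd (sameF_trans hsd (sameF_lmul hs))
      · intro d hd hsd
        exact hxq d hd (sameF_trans (sameF_comm (sameF_trans (sameF_lmul hs) hs)) hsd)
    · rw [glueL_app hl hs]
      refine mem_of_isDec (isDec_of_parts hr hq hx ?_ hxq)
      intro d hd
      rw [hl] at hd; simp at hd; subst hd; exact hs

lemma glueR_mem {p s : List (D1 ⊕ D2)} {x : D1 ⊕ D2} (hp : GoodW A1 A2 p)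
    (hx : ¬ inJ A1 A2 x) (hpx : ∀ c ∈ p.getLast?, ¬ sameF c x)
    (hs : GoodW A1 A2 s) : InOmega A1 A2 (glueR A1 A2 p x s) := by
  cases s with
  | nil =>
    rw [glueR_nil]
    exact mem_of_isDec (q := []) ⟨by simp, rfl, hx, hp, goodW_nil, hpx, by simp⟩
  | cons c v =>
    obtain ⟨hcJ, hcu⟩ := hs.1 c (by simp)
    have hv : GoodW A1 A2 v := goodW_tail hs
    by_cases hsx : sameF x c
    · rw [glueR_merge hsx]
      refine mem_of_isDec (isDec_of_parts hp hv (notJ_rmul hx hcJ hsx) ?_ ?_)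
      · intro d hd hsd
        exact hpx d hd (sameF_trans hsd (sameF_rmul (x := x) (y := c) hsx))
      · intro d hd hsd
        have := (List.isChain_cons.mp hs.2).1 d hd
        exact this (sameF_trans (sameF_comm (sameF_trans (sameF_rmul (x := x) (y := c) hsx) hsx)) hsd)
    · rw [glueR_app hsx]
      refine mem_of_isDec (isDec_of_parts hp hs hx hpx ?_)
      intro d hd
      simp at hd; subst hd; exact hsx

/-! ### the hat homomorphism -/

lemma hat_opL {z z' : List (D1 ⊕ D2) × ℕ} (hz' : InOmega A1 A2 z') :
    hatW A1 A2 (opLspec A1 A2 z z').1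
      = (hatW A1 A2 z'.1).foldl (push A1 A2) (hatW A1 A2 z.1) := by
  rcases omega_cases hz' with ⟨hc, -⟩ | ⟨p, x, q, hd⟩
  · rw [opL_eq_omega1 z hc]
    exact hatW_toRep (good_foldl_push (hatW_good z.1)
      (fun c hc' => ((hatW_good z'.1).1 c hc').1))
  · rw [opL_eq_omega2 z hd, hat_glueL (good_foldl_push (hatW_good z.1)
      (fun c hc' => (hd.2.2.2.1.1 c hc').1)) hd.2.2.2.2.1, hd.1,
      hatW_pxq x hd.2.2.2.1 hd.2.2.2.2.1,
      foldl_push_assoc (hatW_good z.1) hd.2.2.2.1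
        (fun c hc' => (hd.2.2.2.1.1 c hc').1)
        (by intro c hc'
            rcases List.mem_cons.mp hc' with rfl | hc'
            · exact inJ_tau x
            · exact (hd.2.2.2.2.1.1 c hc').1),
      List.foldl_cons]

lemma hat_opR {z z' : List (D1 ⊕ D2) × ℕ} (hz : InOmega A1 A2 z) :
    hatW A1 A2 (opRspec A1 A2 z z').1
      = (hatW A1 A2 z'.1).foldl (push A1 A2) (hatW A1 A2 z.1) := by
  rcases omega_cases hz with ⟨hc, -⟩ | ⟨p, x, q, hd⟩
  · rw [opR_eq_omega1 z' hc]
    exact hatW_toRep (good_foldl_push (hatW_good z.1)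
      (fun c hc' => ((hatW_good z'.1).1 c hc').1))
  · rw [opR_eq_omega2 z' hd,
      hat_glueR hd.2.2.2.1 (good_foldl_push hd.2.2.2.2.1
        (fun c hc' => ((hatW_good z'.1).1 c hc').1)),
      hd.1, hatW_pxq x hd.2.2.2.1 hd.2.2.2.2.1, List.foldl_cons,
      foldl_push_assoc (good_push hd.2.2.2.1 (inJ_tau x)) hd.2.2.2.2.1
        (fun c hc' => (hd.2.2.2.2.1.1 c hc').1)
        (fun c hc' => ((hatW_good z'.1).1 c hc').1)]

/-! ### closure -/

lemma opL_mem {z z' : List (D1 ⊕ D2) × ℕ} (hz' : InOmega A1 A2 z') :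
    InOmega A1 A2 (opLspec A1 A2 z z') := by
  rcases omega_cases hz' with ⟨hc, -⟩ | ⟨p, x, q, hd⟩
  · rw [opL_eq_omega1 z hc]
    exact mem_toRep (good_foldl_push (hatW_good z.1)
      (fun c hc' => ((hatW_good z'.1).1 c hc').1))
  · rw [opL_eq_omega2 z hd]
    exact glueL_mem (good_foldl_push (hatW_good z.1)
      (fun c hc' => (hd.2.2.2.1.1 c hc').1)) hd.2.2.1 hd.2.2.2.2.1 hd.2.2.2.2.2.2

lemma opR_mem {z z' : List (D1 ⊕ D2) × ℕ} (hz : InOmega A1 A2 z) :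
    InOmega A1 A2 (opRspec A1 A2 z z') := by
  rcases omega_cases hz with ⟨hc, -⟩ | ⟨p, x, q, hd⟩
  · rw [opR_eq_omega1 z' hc]
    exact mem_toRep (good_foldl_push (hatW_good z.1)
      (fun c hc' => ((hatW_good z'.1).1 c hc').1))
  · rw [opR_eq_omega2 z' hd]
    exact glueR_mem hd.2.2.2.1 hd.2.2.1 hd.2.2.2.2.2.1
      (good_foldl_push hd.2.2.2.2.1 (fun c hc' => ((hatW_good z'.1).1 c hc').1))

end OmegaLayer2

section OmegaLayer3

variable {D1 D2 : Type} {A1 : DigroupStruct D1} {A2 : DigroupStruct D2}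

lemma goodW_singleton {c : D1 ⊕ D2} (hc : inJ A1 A2 c) (hcu : ¬ unitL A1 A2 c) :
    GoodW A1 A2 [c] :=
  ⟨fun d hd => by simp at hd; subst hd; exact ⟨hc, hcu⟩, List.isChain_singleton c⟩

/-- The key left-composition lemma: absorbing a pushed letter into the
distinguished position. -/
lemma glueL_push {B q : List (D1 ⊕ D2)} {c x : D1 ⊕ D2} (hB : GoodW A1 A2 B)
    (hc : inJ A1 A2 c) (hcu : ¬ unitL A1 A2 c) (hs : sameF c x)
    (hx : ¬ inJ A1 A2 x) :
    glueL A1 A2 (push A1 A2 B c) x q = glueL A1 A2 B (lmulL A1 A2 c x) q := by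
  have hlx_c : sameF (lmulL A1 A2 c x) c := sameF_lmul hs
  have hlx_x : sameF (lmulL A1 A2 c x) x := sameF_trans hlx_c hs
  cases hl : B.getLast? with
  | none =>
    have hBnil : B = [] := List.getLast?_eq_none_iff.mp hl
    subst hBnil
    rw [push_nil hcu, glueL_merge (r := [c]) rfl hs, glueL_none (by simp)]
    rfl
  | some d =>
    obtain ⟨hdJ, hdu⟩ := goodW_last_mem hB hl
    have hdlx : sameF d (lmulL A1 A2 c x) ↔ sameF d c :=
      ⟨fun h => sameF_trans h hlx_c, fun h => sameF_trans h (sameF_comm hlx_c)⟩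
    by_cases hdc : sameF d c
    · by_cases hu : unitL A1 A2 (lmulL A1 A2 d c)
      · -- d ⊢ c = e
        rw [push_merge_unit hcu hl hdc hu]
        have hkey : lmulL A1 A2 d (lmulL A1 A2 c x) = x := by
          rw [← lmul_assoc hdc hs,
            one_lmul hu (sameF_trans (sameF_trans (sameF_lmul hdc) hdc) hs)]
        rw [glueL_merge hl (hdlx.mpr hdc), hkey]
        cases hl2 : B.dropLast.getLast? with
        | none =>
          rw [glueL_none hl2]
          rw [List.getLast?_eq_none_iff] at hl2
          rw [hl2]
          rfl
        | some e =>
          have hed := goodW_last_pair hB hl hl2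
          rw [glueL_app hl2
            (fun h => hed (sameF_trans (sameF_trans h (sameF_comm hs)) (sameF_comm hdc)))]
      · rw [push_merge hcu hl hdc hu,
          glueL_merge (List.getLast?_concat)
            (sameF_trans (sameF_lmul hdc) (sameF_trans hdc hs)),
          glueL_merge hl (hdlx.mpr hdc), List.dropLast_concat,
          lmul_assoc hdc hs]
    · rw [push_app hcu hl hdc,
        glueL_merge (List.getLast?_concat) hs,
        glueL_app hl (fun h => hdc (hdlx.mp h)), List.dropLast_concat]

lemma consP_cons (c d : D1 ⊕ D2) (u' : List (D1 ⊕ D2)) :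
    consP A1 A2 c (d :: u')
      = if sameF c d then
          (if unitL A1 A2 (lmulL A1 A2 c d) then u' else lmulL A1 A2 c d :: u')
        else c :: d :: u' := rfl

lemma foldl_push_cons_acc {c : D1 ⊕ D2} {v m : List (D1 ⊕ D2)}
    (h : GoodW A1 A2 (c :: v)) (hm : ∀ a ∈ m, inJ A1 A2 a) :
    m.foldl (push A1 A2) (c :: v) = consP A1 A2 c (m.foldl (push A1 A2) v) := by
  obtain ⟨hcJ, hcu⟩ := h.1 c (by simp)
  have hv : GoodW A1 A2 v := goodW_tail h
  have h1 : m.foldl (push A1 A2) (c :: v) = reduceW A1 A2 ((c :: v) ++ m) :=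
    (reduceW_good_append h).symm
  have h2 : reduceW A1 A2 ((c :: v) ++ m) = (v ++ m).foldl (push A1 A2) [c] := by
    show ((c :: (v ++ m)).foldl (push A1 A2) []) = _
    rw [List.foldl_cons, push_nil hcu]
  have hvm : ∀ a ∈ v ++ m, inJ A1 A2 a := by
    intro a ha
    rcases List.mem_append.mp ha with ha | ha
    · exact (hv.1 a ha).1
    · exact hm a ha
  rw [h1, h2, foldl_push_reduceW (goodW_singleton hcJ hcu) hvm,
    consP_spec (reduceW_good hvm) hcJ hcu, reduceW_good_append hv]

/-- The key right-composition lemma. -/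
lemma glueR_rmul {p u : List (D1 ⊕ D2)} {x c : D1 ⊕ D2} (hp : GoodW A1 A2 p)
    (hx : ¬ inJ A1 A2 x)
    (hc : inJ A1 A2 c) (hcu : ¬ unitL A1 A2 c) (hs : sameF x c)
    (hu : GoodW A1 A2 u) :
    glueR A1 A2 p (rmulL A1 A2 x c) u = glueR A1 A2 p x (consP A1 A2 c u) := by
  have hrx : sameF (rmulL A1 A2 x c) x := sameF_rmul (x := x) (y := c) hs
  cases u with
  | nil =>
    show _ = glueR A1 A2 p x [c]
    rw [glueR_nil, glueR_merge hs]
  | cons d u' =>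
    obtain ⟨hdJ, hdu⟩ := hu.1 d (by simp)
    rw [consP_cons]
    by_cases hcd : sameF c d
    · have hrd : sameF (rmulL A1 A2 x c) d := sameF_trans hrx (sameF_trans hs hcd)
      rw [glueR_merge hrd, rmul_rmul hc hdJ hs hcd, if_pos hcd]
      by_cases hun : unitL A1 A2 (lmulL A1 A2 c d)
      · rw [if_pos hun,
          rmul_unit hun (sameF_trans hs (sameF_comm (sameF_lmul hcd)))]
        cases u' with
        | nil => rw [glueR_nil]
        | cons e u'' =>
          have hde : ¬ sameF d e := (List.isChain_cons.mp hu.2).1 e rfl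
          have hxe : ¬ sameF x e :=
            fun h => hde (sameF_trans (sameF_comm (sameF_trans hs hcd)) h)
          rw [glueR_app hxe]
      · rw [if_neg hun,
          glueR_merge (sameF_trans hs (sameF_comm (sameF_lmul hcd)))]
    · have hnrd : ¬ sameF (rmulL A1 A2 x c) d :=
        fun h => hcd (sameF_trans (sameF_comm (sameF_trans hrx hs)) h)
      rw [if_neg hcd, glueR_app hnrd, glueR_merge hs]


/-- `opLspec` composed with a `glueL` result. -/
lemma opL_glueL (z : List (D1 ⊕ D2) × ℕ) {r q : List (D1 ⊕ D2)} {x : D1 ⊕ D2}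
    (hr : GoodW A1 A2 r) (hx : ¬ inJ A1 A2 x) (hq : GoodW A1 A2 q)
    (hxq : ∀ c ∈ q.head?, ¬ sameF x c) :
    opLspec A1 A2 z (glueL A1 A2 r x q)
      = glueL A1 A2 (r.foldl (push A1 A2) (hatW A1 A2 z.1)) x q := by
  cases hl : r.getLast? with
  | none =>
    have hrnil : r = [] := List.getLast?_eq_none_iff.mp hl
    subst hrnil
    rw [glueL_none (by simp),
      opL_eq_omega2 z (show IsDec A1 A2 (x :: q, 1) [] x q from
        isDec_of_parts goodW_nil hq hx (by simp) hxq)]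
  | some c =>
    obtain ⟨hcJ, hcu⟩ := goodW_last_mem hr hl
    by_cases hs : sameF c x
    · rw [glueL_merge hl hs,
        opL_eq_omega2 z (isDec_of_parts (goodW_dropLast hr) hq
          (notJ_lmul hcJ hx hs)
          (fun d hd hsd => goodW_last_pair hr hl hd (sameF_trans hsd (sameF_lmul hs)))
          (fun d hd hsd => hxq d hd
            (sameF_trans (sameF_comm (sameF_trans (sameF_lmul hs) hs)) hsd)))]
      have hfold : r.foldl (push A1 A2) (hatW A1 A2 z.1)
          = push A1 A2 (r.dropLast.foldl (push A1 A2) (hatW A1 A2 z.1)) c := by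
        conv_lhs => rw [getLast?_some_eq hl]
        rw [List.foldl_append]
        rfl
      rw [hfold, glueL_push (good_foldl_push (hatW_good z.1)
        (fun d hd => ((goodW_dropLast hr).1 d hd).1)) hcJ hcu hs hx]
    · rw [glueL_app hl hs,
        opL_eq_omega2 z (isDec_of_parts hr hq hx
          (fun d hd => by rw [hl] at hd; simp at hd; subst hd; exact hs) hxq)]

/-- `opRspec` composed with a `glueR` result. -/
lemma opR_glueR (z' : List (D1 ⊕ D2) × ℕ) {p s : List (D1 ⊕ D2)} {x : D1 ⊕ D2}
    (hp : GoodW A1 A2 p) (hx : ¬ inJ A1 A2 x)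
    (hpx : ∀ c ∈ p.getLast?, ¬ sameF c x) (hs : GoodW A1 A2 s) :
    opRspec A1 A2 (glueR A1 A2 p x s) z'
      = glueR A1 A2 p x ((hatW A1 A2 z'.1).foldl (push A1 A2) s) := by
  have hhat : ∀ a ∈ hatW A1 A2 z'.1, inJ A1 A2 a :=
    fun a ha => ((hatW_good z'.1).1 a ha).1
  cases s with
  | nil =>
    rw [glueR_nil,
      opR_eq_omega2 z' (show IsDec A1 A2 (p ++ [x], p.length + 1) p x [] from
        isDec_of_parts hp goodW_nil hx hpx (by simp))]
  | cons c v =>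
    obtain ⟨hcJ, hcu⟩ := hs.1 c (by simp)
    have hv : GoodW A1 A2 v := goodW_tail hs
    by_cases hsx : sameF x c
    · rw [glueR_merge hsx,
        opR_eq_omega2 z' (isDec_of_parts hp hv (notJ_rmul hx hcJ hsx)
          (fun d hd hsd => hpx d hd
            (sameF_trans hsd (sameF_rmul (x := x) (y := c) hsx)))
          (fun d hd hsd => (List.isChain_cons.mp hs.2).1 d hd
            (sameF_trans (sameF_comm
              (sameF_trans (sameF_rmul (x := x) (y := c) hsx) hsx)) hsd))),
        foldl_push_cons_acc hs hhat]
      exact glueR_rmul hp hx hcJ hcu hsx (good_foldl_push hv hhat)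
    · rw [glueR_app hsx,
        opR_eq_omega2 z' (isDec_of_parts hp hs hx hpx
          (fun d hd => by simp at hd; subst hd; exact hsx))]

end OmegaLayer3

section OmegaLayer4

variable {D1 D2 : Type} {A1 : DigroupStruct D1} {A2 : DigroupStruct D2}

lemma good_inJ {w : List (D1 ⊕ D2)} (h : GoodW A1 A2 w) : ∀ c ∈ w, inJ A1 A2 c :=
  fun c hc => (h.1 c hc).1

lemma opL_toRep (z : List (D1 ⊕ D2) × ℕ) {s : List (D1 ⊕ D2)}
    (hs : GoodW A1 A2 s) :
    opLspec A1 A2 z (toRep A1 s, 1)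
      = (toRep A1 (s.foldl (push A1 A2) (hatW A1 A2 z.1)), 1) := by
  rw [opL_eq_omega1 z (cond_toRep hs)]
  show (toRep A1 ((hatW A1 A2 (toRep A1 s)).foldl (push A1 A2) (hatW A1 A2 z.1)), 1) = _
  rw [hatW_toRep hs]

lemma opR_toRep (z' : List (D1 ⊕ D2) × ℕ) {s : List (D1 ⊕ D2)}
    (hs : GoodW A1 A2 s) :
    opRspec A1 A2 (toRep A1 s, 1) z'
      = (toRep A1 ((hatW A1 A2 z'.1).foldl (push A1 A2) s), 1) := by
  rw [opR_eq_omega1 z' (cond_toRep hs)]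
  show (toRep A1 ((hatW A1 A2 z'.1).foldl (push A1 A2) (hatW A1 A2 (toRep A1 s))), 1) = _
  rw [hatW_toRep hs]

lemma spec_l_assoc {a b c : List (D1 ⊕ D2) × ℕ} (hb : InOmega A1 A2 b)
    (hc : InOmega A1 A2 c) :
    opLspec A1 A2 (opLspec A1 A2 a b) c = opLspec A1 A2 a (opLspec A1 A2 b c) := by
  have hRa := hatW_good (A1 := A1) (A2 := A2) a.1
  have hRb := hatW_good (A1 := A1) (A2 := A2) b.1
  have hRc := hatW_good (A1 := A1) (A2 := A2) c.1
  rcases omega_cases hc with ⟨hcc, -⟩ | ⟨p, x, q, hd⟩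
  · rw [opL_eq_omega1 b hcc, opL_eq_omega1 (opLspec A1 A2 a b) hcc, hat_opL hb,
      opL_toRep a (good_foldl_push hRb (good_inJ hRc)),
      foldl_push_assoc hRa hRb (good_inJ hRb) (good_inJ hRc)]
  · obtain ⟨hw, hn, hx, hp, hq, hpx, hxq⟩ := hd
    have hd' : IsDec A1 A2 c p x q := ⟨hw, hn, hx, hp, hq, hpx, hxq⟩
    rw [opL_eq_omega2 b hd', opL_eq_omega2 (opLspec A1 A2 a b) hd', hat_opL hb,
      opL_glueL a (good_foldl_push hRb (good_inJ hp)) hx hq hxq,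
      foldl_push_assoc hRa hRb (good_inJ hRb) (good_inJ hp)]

lemma spec_r_assoc {a b c : List (D1 ⊕ D2) × ℕ} (ha : InOmega A1 A2 a)
    (hb : InOmega A1 A2 b) :
    opRspec A1 A2 (opRspec A1 A2 a b) c = opRspec A1 A2 a (opRspec A1 A2 b c) := by
  have hRa := hatW_good (A1 := A1) (A2 := A2) a.1
  have hRb := hatW_good (A1 := A1) (A2 := A2) b.1
  have hRc := hatW_good (A1 := A1) (A2 := A2) c.1
  rcases omega_cases ha with ⟨hac, -⟩ | ⟨p, x, q, hd⟩
  · rw [opR_eq_omega1 b hac, opR_eq_omega1 (opRspec A1 A2 b c) hac, hat_opR hb,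
      opR_toRep c (good_foldl_push hRa (good_inJ hRb)),
      foldl_push_assoc hRa hRb (good_inJ hRb) (good_inJ hRc)]
  · obtain ⟨hw, hn, hx, hp, hq, hpx, hxq⟩ := hd
    have hd' : IsDec A1 A2 a p x q := ⟨hw, hn, hx, hp, hq, hpx, hxq⟩
    rw [opR_eq_omega2 b hd', opR_eq_omega2 (opRspec A1 A2 b c) hd', hat_opR hb,
      opR_glueR c hp hx hpx (good_foldl_push hq (good_inJ hRb)),
      foldl_push_assoc hq hRb (good_inJ hRb) (good_inJ hRc)]

lemma spec_ax1 {a b c : List (D1 ⊕ D2) × ℕ} (ha : InOmega A1 A2 a)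
    (hb : InOmega A1 A2 b) (hc : InOmega A1 A2 c) :
    opRspec A1 A2 a (opLspec A1 A2 b c) = opRspec A1 A2 a (opRspec A1 A2 b c) := by
  rcases omega_cases ha with ⟨hac, -⟩ | ⟨p, x, q, hd⟩
  · rw [opR_eq_omega1 (opLspec A1 A2 b c) hac, opR_eq_omega1 (opRspec A1 A2 b c) hac,
      hat_opL hc, hat_opR hb]
  · obtain ⟨hw, hn, hx, hp, hq, hpx, hxq⟩ := hd
    have hd' : IsDec A1 A2 a p x q := ⟨hw, hn, hx, hp, hq, hpx, hxq⟩
    rw [opR_eq_omega2 (opLspec A1 A2 b c) hd', opR_eq_omega2 (opRspec A1 A2 b c) hd',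
      hat_opL hc, hat_opR hb]

lemma spec_ax2 {a b c : List (D1 ⊕ D2) × ℕ} (ha : InOmega A1 A2 a)
    (hb : InOmega A1 A2 b) (hc : InOmega A1 A2 c) :
    opLspec A1 A2 (opRspec A1 A2 a b) c = opLspec A1 A2 (opLspec A1 A2 a b) c := by
  rcases omega_cases hc with ⟨hcc, -⟩ | ⟨p, x, q, hd⟩
  · rw [opL_eq_omega1 (opRspec A1 A2 a b) hcc, opL_eq_omega1 (opLspec A1 A2 a b) hcc,
      hat_opR ha, hat_opL hb]
  · obtain ⟨hw, hn, hx, hp, hq, hpx, hxq⟩ := hd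
    have hd' : IsDec A1 A2 c p x q := ⟨hw, hn, hx, hp, hq, hpx, hxq⟩
    rw [opL_eq_omega2 (opRspec A1 A2 a b) hd', opL_eq_omega2 (opLspec A1 A2 a b) hd',
      hat_opR ha, hat_opL hb]

lemma spec_ax3_core (a c : List (D1 ⊕ D2) × ℕ) {p q : List (D1 ⊕ D2)}
    {x : D1 ⊕ D2} (hp : GoodW A1 A2 p) (hq : GoodW A1 A2 q) (hx : ¬ inJ A1 A2 x)
    (hpx : ∀ d ∈ p.getLast?, ¬ sameF d x) (hxq : ∀ d ∈ q.head?, ¬ sameF x d) :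
    opLspec A1 A2 a (glueR A1 A2 p x ((hatW A1 A2 c.1).foldl (push A1 A2) q))
      = opRspec A1 A2 (glueL A1 A2 (p.foldl (push A1 A2) (hatW A1 A2 a.1)) x q) c := by
  have hRa := hatW_good (A1 := A1) (A2 := A2) a.1
  have hRc := hatW_good (A1 := A1) (A2 := A2) c.1
  obtain ⟨r₀, hr0⟩ : ∃ t, p.foldl (push A1 A2) (hatW A1 A2 a.1) = t := ⟨_, rfl⟩
  obtain ⟨s, hs0⟩ : ∃ t, (hatW A1 A2 c.1).foldl (push A1 A2) q = t := ⟨_, rfl⟩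
  have hr₀ : GoodW A1 A2 r₀ := hr0 ▸ good_foldl_push hRa (good_inJ hp)
  have hsG : GoodW A1 A2 s := hs0 ▸ good_foldl_push hq (good_inJ hRc)
  rw [hr0, hs0]
  cases s with
  | nil =>
    rw [glueR_nil,
      opL_eq_omega2 a (show IsDec A1 A2 (p ++ [x], p.length + 1) p x [] from
        isDec_of_parts hp goodW_nil hx hpx (by simp)), hr0]
    cases hl : r₀.getLast? with
    | none =>
      rw [glueL_none hl, glueL_none hl,
        opR_eq_omega2 c (show IsDec A1 A2 (x :: q, 1) [] x q from
          isDec_of_parts goodW_nil hq hx (by simp) hxq), hs0]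
      rfl
    | some c₀ =>
      obtain ⟨hc₀J, hc₀u⟩ := goodW_last_mem hr₀ hl
      by_cases h₀ : sameF c₀ x
      · rw [glueL_merge hl h₀, glueL_merge hl h₀,
          opR_eq_omega2 c (isDec_of_parts (goodW_dropLast hr₀) hq
            (notJ_lmul hc₀J hx h₀)
            (fun d hd hsd => goodW_last_pair hr₀ hl hd
              (sameF_trans hsd (sameF_lmul h₀)))
            (fun d hd hsd => hxq d hd
              (sameF_trans (sameF_comm (sameF_trans (sameF_lmul h₀) h₀)) hsd))),
          hs0, glueR_nil]
      · rw [glueL_app hl h₀, glueL_app hl h₀,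
          opR_eq_omega2 c (isDec_of_parts hr₀ hq hx
            (fun d hd => by rw [hl] at hd; simp at hd; subst hd; exact h₀) hxq),
          hs0, glueR_nil]
  | cons c' v =>
    obtain ⟨hc'J, hc'u⟩ := hsG.1 c' (by simp)
    have hv : GoodW A1 A2 v := goodW_tail hsG
    by_cases hsx : sameF x c'
    · have hrxc : sameF (rmulL A1 A2 x c') x := sameF_rmul (x := x) (y := c') hsx
      rw [glueR_merge hsx,
        opL_eq_omega2 a (isDec_of_parts hp hv (notJ_rmul hx hc'J hsx)
          (fun d hd hsd => hpx d hd (sameF_trans hsd hrxc))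
          (fun d hd hsd => (List.isChain_cons.mp hsG.2).1 d hd
            (sameF_trans (sameF_comm (sameF_trans hrxc hsx)) hsd))), hr0]
      cases hl : r₀.getLast? with
      | none =>
        rw [glueL_none hl, glueL_none hl,
          opR_eq_omega2 c (show IsDec A1 A2 (x :: q, 1) [] x q from
            isDec_of_parts goodW_nil hq hx (by simp) hxq),
          hs0, glueR_merge hsx]
        rfl
      | some c₀ =>
        obtain ⟨hc₀J, hc₀u⟩ := goodW_last_mem hr₀ hl
        by_cases h₀ : sameF c₀ x
        · rw [glueL_merge hl (sameF_trans h₀ (sameF_comm hrxc)),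
            glueL_merge hl h₀,
            opR_eq_omega2 c (isDec_of_parts (goodW_dropLast hr₀) hq
              (notJ_lmul hc₀J hx h₀)
              (fun d hd hsd => goodW_last_pair hr₀ hl hd
                (sameF_trans hsd (sameF_lmul h₀)))
              (fun d hd hsd => hxq d hd
                (sameF_trans (sameF_comm (sameF_trans (sameF_lmul h₀) h₀)) hsd))),
            hs0, glueR_merge (sameF_trans (sameF_trans (sameF_lmul h₀) h₀) hsx),
            letter_ax3 h₀ hsx]
        · rw [glueL_app hl (fun h => h₀ (sameF_trans h hrxc)),
            glueL_app hl h₀,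
            opR_eq_omega2 c (isDec_of_parts hr₀ hq hx
              (fun d hd => by rw [hl] at hd; simp at hd; subst hd; exact h₀) hxq),
            hs0, glueR_merge hsx]
    · rw [glueR_app hsx,
        opL_eq_omega2 a (isDec_of_parts hp hsG hx hpx
          (fun d hd => by simp at hd; subst hd; exact hsx)), hr0]
      cases hl : r₀.getLast? with
      | none =>
        rw [glueL_none hl, glueL_none hl,
          opR_eq_omega2 c (show IsDec A1 A2 (x :: q, 1) [] x q from
            isDec_of_parts goodW_nil hq hx (by simp) hxq),
          hs0, glueR_app hsx]
        rfl
      | some c₀ =>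
        obtain ⟨hc₀J, hc₀u⟩ := goodW_last_mem hr₀ hl
        by_cases h₀ : sameF c₀ x
        · rw [glueL_merge hl h₀, glueL_merge hl h₀,
            opR_eq_omega2 c (isDec_of_parts (goodW_dropLast hr₀) hq
              (notJ_lmul hc₀J hx h₀)
              (fun d hd hsd => goodW_last_pair hr₀ hl hd
                (sameF_trans hsd (sameF_lmul h₀)))
              (fun d hd hsd => hxq d hd
                (sameF_trans (sameF_comm (sameF_trans (sameF_lmul h₀) h₀)) hsd))),
            hs0,
            glueR_app (fun h => hsx (sameF_trans
              (sameF_comm (sameF_trans (sameF_lmul h₀) h₀)) h))]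
        · rw [glueL_app hl h₀, glueL_app hl h₀,
            opR_eq_omega2 c (isDec_of_parts hr₀ hq hx
              (fun d hd => by rw [hl] at hd; simp at hd; subst hd; exact h₀) hxq),
            hs0, glueR_app hsx]

lemma spec_ax3 {a b c : List (D1 ⊕ D2) × ℕ} (hb : InOmega A1 A2 b) :
    opLspec A1 A2 a (opRspec A1 A2 b c) = opRspec A1 A2 (opLspec A1 A2 a b) c := by
  have hRa := hatW_good (A1 := A1) (A2 := A2) a.1
  have hRb := hatW_good (A1 := A1) (A2 := A2) b.1
  have hRc := hatW_good (A1 := A1) (A2 := A2) c.1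
  rcases omega_cases hb with ⟨hbc, -⟩ | ⟨p, x, q, hd⟩
  · rw [opR_eq_omega1 c hbc,
      opL_toRep a (good_foldl_push hRb (good_inJ hRc)),
      opL_eq_omega1 a hbc,
      opR_toRep c (good_foldl_push hRa (good_inJ hRb)),
      foldl_push_assoc hRa hRb (good_inJ hRb) (good_inJ hRc)]
  · obtain ⟨hw, hn, hx, hp, hq, hpx, hxq⟩ := hd
    have hd' : IsDec A1 A2 b p x q := ⟨hw, hn, hx, hp, hq, hpx, hxq⟩
    rw [opR_eq_omega2 c hd', opL_eq_omega2 a hd']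
    exact spec_ax3_core a c hp hq hx hpx hxq

lemma spec_one_l {a : List (D1 ⊕ D2) × ℕ} (ha : InOmega A1 A2 a) :
    opLspec A1 A2 ([Sum.inl A1.one], 1) a = a := by
  rcases omega_cases ha with ⟨hac, -⟩ | ⟨p, x, q, hd⟩
  · rw [opL_eq_omega1 ([Sum.inl A1.one], 1) hac]
    show (toRep A1 ((hatW A1 A2 a.1).foldl (push A1 A2)
      (hatW A1 A2 [Sum.inl A1.one])), 1) = a
    rw [hatW_one]
    show (toRep A1 (reduceW A1 A2 (hatW A1 A2 a.1)), 1) = a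
    rw [reduceW_eq_self (hatW_good a.1)]
    exact omega1_val ha hac
  · obtain ⟨hw, hn, hx, hp, hq, hpx, hxq⟩ := hd
    rw [opL_eq_omega2 ([Sum.inl A1.one], 1) ⟨hw, hn, hx, hp, hq, hpx, hxq⟩]
    show glueL A1 A2 (p.foldl (push A1 A2) (hatW A1 A2 [Sum.inl A1.one])) x q = a
    rw [hatW_one]
    show glueL A1 A2 (reduceW A1 A2 p) x q = a
    rw [reduceW_eq_self hp]
    cases hl : p.getLast? with
    | none =>
      rw [glueL_none hl]
      rw [List.getLast?_eq_none_iff] at hl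
      rw [hl] at hw hn
      exact (Prod.ext hw hn).symm
    | some d =>
      rw [glueL_app hl (hpx d hl)]
      exact (Prod.ext hw hn).symm

lemma spec_r_one {a : List (D1 ⊕ D2) × ℕ} (ha : InOmega A1 A2 a) :
    opRspec A1 A2 a ([Sum.inl A1.one], 1) = a := by
  rcases omega_cases ha with ⟨hac, -⟩ | ⟨p, x, q, hd⟩
  · rw [opR_eq_omega1 ([Sum.inl A1.one], 1) hac]
    show (toRep A1 ((hatW A1 A2 [Sum.inl A1.one]).foldl
      (push A1 A2) (hatW A1 A2 a.1)), 1) = a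
    rw [hatW_one]
    exact omega1_val ha hac
  · obtain ⟨hw, hn, hx, hp, hq, hpx, hxq⟩ := hd
    rw [opR_eq_omega2 ([Sum.inl A1.one], 1) ⟨hw, hn, hx, hp, hq, hpx, hxq⟩]
    show glueR A1 A2 p x ((hatW A1 A2 [Sum.inl A1.one]).foldl (push A1 A2) q) = a
    rw [hatW_one]
    show glueR A1 A2 p x q = a
    cases q with
    | nil =>
      rw [glueR_nil]
      rw [show p ++ [x] = p ++ x :: [] from rfl, ← hw]
      exact Prod.ext rfl hn.symm
    | cons d v =>
      rw [glueR_app (hxq d rfl), ← hw]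
      exact Prod.ext rfl hn.symm

lemma spec_l_inv {a : List (D1 ⊕ D2) × ℕ} :
    opLspec A1 A2 a (toRep A1 (invW A1 A2 (hatW A1 A2 a.1)), 1)
      = ([Sum.inl A1.one], 1) := by
  rw [opL_toRep a (goodW_invW (hatW_good a.1)), cancel_right (hatW_good a.1)]
  rfl

lemma spec_inv_r {a : List (D1 ⊕ D2) × ℕ} :
    opRspec A1 A2 (toRep A1 (invW A1 A2 (hatW A1 A2 a.1)), 1) a
      = ([Sum.inl A1.one], 1) := by
  rw [opR_toRep a (goodW_invW (hatW_good a.1)), cancel_left (hatW_good a.1)]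
  rfl

end OmegaLayer4

/-- The construction `Ω = Ω₁ ∪ Ω₂` with the operations defined by reduction and
multiplication at the distinguished position is a digroup with bar-unit `[e₁]₁`. -/
theorem omega_is_digroup {D1 D2 : Type}
    (A1 : DigroupStruct D1) (A2 : DigroupStruct D2) :
    ∃ Q : DigroupStruct (Omega A1 A2),
      Q.one.val = ([Sum.inl A1.one], 1) ∧
      (∀ z z' : Omega A1 A2, (Q.l z z').val = opLspec A1 A2 z.val z'.val) ∧
      (∀ z z' : Omega A1 A2, (Q.r z z').val = opRspec A1 A2 z.val z'.val) := by
  refine ⟨{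
      l := fun z z' => ⟨opLspec A1 A2 z.1 z'.1, opL_mem z'.2⟩
      r := fun z z' => ⟨opRspec A1 A2 z.1 z'.1, opR_mem z.2⟩
      one := ⟨([Sum.inl A1.one], 1), Or.inl ⟨rfl, Or.inl rfl⟩⟩
      inv := fun z => ⟨(toRep A1 (invW A1 A2 (hatW A1 A2 z.1.1)), 1),
        mem_toRep (goodW_invW (hatW_good _))⟩
      l_assoc := fun a b c => Subtype.ext (spec_l_assoc b.2 c.2)
      r_assoc := fun a b c => Subtype.ext (spec_r_assoc a.2 b.2)
      ax1 := fun a b c => Subtype.ext (spec_ax1 a.2 b.2 c.2)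
      ax2 := fun a b c => Subtype.ext (spec_ax2 a.2 b.2 c.2)
      ax3 := fun a b c => Subtype.ext (spec_ax3 b.2)
      one_l := fun a => Subtype.ext (spec_one_l a.2)
      r_one := fun a => Subtype.ext (spec_r_one a.2)
      l_inv := fun a => Subtype.ext spec_l_inv
      inv_r := fun a => Subtype.ext spec_inv_r }, rfl, fun _ _ => rfl,
    fun _ _ => rfl⟩
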